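/- arXiv:2104.08299 — 10 statements merged into one kernel-verified Lean document; each statement's English description precedes it below -/
import Mathlib

section
/- For every integer p ≥ 3, setting β_sh = sqrt((p-1)^(p-1) / (p * (p-2)^(p-2))), the function f(t) = β_sh^2 * t^p + log(1-t) + t satisfies f(t) ≤ 0 for all t ∈ [0,1). -/
lemma logA (t : ℝ) (h0 : 0 ≤ t) (h1 : t < 1) (n : ℕ) :
    ∑ i ∈ Finset.range n, t ^ (i + 1) / (i + 1) ≤ -Real.log (1 - t) := by
  have hs := Real.hasSum_pow_div_log_of_abs_lt_one (x := t) (by rwa [abs_of_nonneg h0])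
  exact sum_le_hasSum (Finset.range n)
    (fun i _ => div_nonneg (pow_nonneg h0 _) (by positivity)) hs

lemma finish0 (t : ℝ) (h0 : 0 ≤ t) (h1 : t < 1) (b : ℝ) (p K : ℕ)
    (hpoly : b * t ^ p + t ≤ ∑ i ∈ Finset.range K, t ^ (i + 1) / (i + 1)) :
    b * t ^ p + Real.log (1 - t) + t ≤ 0 := by
  have := logA t h0 h1 K; linarith

lemma coeffCase (t : ℝ) (h0 : 0 ≤ t) (h1 : t < 1) (b : ℝ) (p : ℕ) (hp : 2 ≤ p)
    (hb : 0 ≤ b) (hbH : b ≤ ∑ i ∈ Finset.range (p - 1), (1 : ℝ) / (i + 2)) :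
    b * t ^ p + t ≤ ∑ i ∈ Finset.range p, t ^ (i + 1) / (i + 1) := by
  have hsplit : ∑ i ∈ Finset.range p, t ^ (i + 1) / (i + 1)
      = (∑ i ∈ Finset.range (p - 1), t ^ (i + 2) / (i + 2)) + t := by
    obtain ⟨m, rfl⟩ : ∃ m, p = m + 1 := ⟨p - 1, by omega⟩
    rw [Finset.sum_range_succ' (fun i => t ^ (i + 1) / (i + 1)) m]
    norm_num
    apply Finset.sum_congr rfl
    intro i _
    push_cast
    ring_nf
  rw [hsplit]
  have key : b * t ^ p ≤ ∑ i ∈ Finset.range (p - 1), t ^ (i + 2) / (i + 2) := by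
    calc b * t ^ p ≤ (∑ i ∈ Finset.range (p - 1), (1 : ℝ) / (i + 2)) * t ^ p := by
          apply mul_le_mul_of_nonneg_right hbH (pow_nonneg h0 _)
      _ = ∑ i ∈ Finset.range (p - 1), t ^ p / (i + 2) := by
          rw [Finset.sum_mul]; apply Finset.sum_congr rfl; intros; ring
      _ ≤ ∑ i ∈ Finset.range (p - 1), t ^ (i + 2) / (i + 2) := by
          apply Finset.sum_le_sum
          intro i hi
          have hle : t ^ p ≤ t ^ (i + 2) := by
            apply pow_le_pow_of_le_one h0 h1.le
            simp only [Finset.mem_range] at hi; omega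
          gcongr
  linarith

lemma bigBound (p : ℕ) (hp : 23 ≤ p) :
    ((p : ℝ) - 1) ^ (p - 1) / ((p : ℝ) * ((p : ℝ) - 2) ^ (p - 2))
      ≤ ∑ i ∈ Finset.range (p - 1), (1 : ℝ) / (i + 2) := by
  obtain ⟨n, rfl⟩ : ∃ n, p = n + 2 := ⟨p - 2, by omega⟩
  have hn : 21 ≤ n := by omega
  have hn0 : (0:ℝ) < n := by
    have : (21:ℝ) ≤ n := by exact_mod_cast hn
    linarith
  have hcast1 : ((n + 2 : ℕ) : ℝ) - 1 = (n : ℝ) + 1 := by push_cast; ring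
  have hcast2 : ((n + 2 : ℕ) : ℝ) - 2 = (n : ℝ) := by push_cast; ring
  have hcast3 : ((n + 2 : ℕ) : ℝ) = (n : ℝ) + 2 := by push_cast; ring
  have hsub1 : n + 2 - 1 = n + 1 := by omega
  have hsub2 : n + 2 - 2 = n := by omega
  rw [hcast1, hcast2, hcast3, hsub1, hsub2]
  have hb2eq : ((n:ℝ) + 1) ^ (n + 1) / (((n:ℝ) + 2) * (n:ℝ) ^ n)
      = (((n:ℝ) + 1) / n) ^ n * (((n:ℝ) + 1) / ((n:ℝ) + 2)) := by
    rw [div_pow, pow_succ]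
    field_simp
  rw [hb2eq]
  have hexp : (((n:ℝ) + 1) / n) ^ n ≤ Real.exp 1 := by
    have h1 : ((n:ℝ) + 1) / n = 1 / n + 1 := by field_simp; ring
    have h2 : (1 / (n:ℝ) + 1) ≤ Real.exp (1 / n) := Real.add_one_le_exp _
    calc (((n:ℝ) + 1) / n) ^ n ≤ Real.exp (1 / n) ^ n := by
          rw [h1]; exact pow_le_pow_left₀ (by positivity) h2 n
      _ = Real.exp ((n : ℝ) * (1 / n)) := (Real.exp_nat_mul _ n).symm
      _ = Real.exp 1 := by rw [mul_one_div, div_self (ne_of_gt hn0)]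
  have hfrac : ((n:ℝ) + 1) / ((n:ℝ) + 2) ≤ 1 := by
    rw [div_le_one (by linarith)]; linarith
  have step1 : (((n:ℝ) + 1) / n) ^ n * (((n:ℝ) + 1) / ((n:ℝ) + 2)) ≤ Real.exp 1 := by
    calc (((n:ℝ) + 1) / n) ^ n * (((n:ℝ) + 1) / ((n:ℝ) + 2))
        ≤ Real.exp 1 * 1 := by
          apply mul_le_mul hexp hfrac (by positivity) (Real.exp_pos 1).le
      _ = Real.exp 1 := mul_one _
  have step2 : Real.exp 1 ≤ ∑ i ∈ Finset.range 22, (1 : ℝ) / (i + 2) := by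
    have := Real.exp_one_lt_d9
    have hsum : (2.7182818286 : ℝ) ≤ ∑ i ∈ Finset.range 22, (1 : ℝ) / (i + 2) := by
      norm_num [Finset.sum_range_succ]
    linarith
  have step3 : ∑ i ∈ Finset.range 22, (1 : ℝ) / (i + 2)
      ≤ ∑ i ∈ Finset.range (n + 1), (1 : ℝ) / (i + 2) := by
    apply Finset.sum_le_sum_of_subset_of_nonneg
    · apply Finset.range_subset_range.mpr; omega
    · intros; positivity
  linarith

lemma poly3 (t : ℝ) (h0 : 0 ≤ t) (h1 : t < 1) :
    (4/3 : ℝ) * t ^ 3 + t ≤ ∑ i ∈ Finset.range 6, t ^ (i + 1) / (i + 1) := by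
  have h1t : (0:ℝ) ≤ 1 - t := by linarith
  have hsum : ∑ i ∈ Finset.range 6, t ^ (i + 1) / ((i : ℝ) + 1) = t + t ^ 2 / 2 + t ^ 3 / 3 + t ^ 4 / 4 + t ^ 5 / 5 + t ^ 6 / 6 := by
    norm_num [Finset.sum_range_succ]
  have hc : (0:ℝ) ≤ (1/2:ℝ) * t ^ 2 * (1 - t) ^ 10 + (4:ℝ) * t ^ 3 * (1 - t) ^ 9 + (55/4:ℝ) * t ^ 4 * (1 - t) ^ 8 + (131/5:ℝ) * t ^ 5 * (1 - t) ^ 7 + (887/30:ℝ) * t ^ 6 * (1 - t) ^ 6 + (96/5:ℝ) * t ^ 7 * (1 - t) ^ 5 + (6:ℝ) * t ^ 8 * (1 - t) ^ 4 + (1/3:ℝ) * t ^ 9 * (1 - t) ^ 3 + (1/5:ℝ) * t ^ 10 * (1 - t) ^ 2 + (2/5:ℝ) * t ^ 11 * (1 - t) ^ 1 + (7/60:ℝ) * t ^ 12 * (1 - t) ^ 0 := by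
    repeat' apply add_nonneg
    all_goals apply mul_nonneg (mul_nonneg (by norm_num) (pow_nonneg h0 _)) (pow_nonneg h1t _)
  have hkey : (4/3 : ℝ) * t ^ 3 + t = (t + t ^ 2 / 2 + t ^ 3 / 3 + t ^ 4 / 4 + t ^ 5 / 5 + t ^ 6 / 6) - ((1/2:ℝ) * t ^ 2 * (1 - t) ^ 10 + (4:ℝ) * t ^ 3 * (1 - t) ^ 9 + (55/4:ℝ) * t ^ 4 * (1 - t) ^ 8 + (131/5:ℝ) * t ^ 5 * (1 - t) ^ 7 + (887/30:ℝ) * t ^ 6 * (1 - t) ^ 6 + (96/5:ℝ) * t ^ 7 * (1 - t) ^ 5 + (6:ℝ) * t ^ 8 * (1 - t) ^ 4 + (1/3:ℝ) * t ^ 9 * (1 - t) ^ 3 + (1/5:ℝ) * t ^ 10 * (1 - t) ^ 2 + (2/5:ℝ) * t ^ 11 * (1 - t) ^ 1 + (7/60:ℝ) * t ^ 12 * (1 - t) ^ 0) := by ring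
  rw [hsum, hkey]
  exact sub_le_self _ hc

lemma poly4 (t : ℝ) (h0 : 0 ≤ t) (h1 : t < 1) :
    (27/16 : ℝ) * t ^ 4 + t ≤ ∑ i ∈ Finset.range 8, t ^ (i + 1) / (i + 1) := by
  have h1t : (0:ℝ) ≤ 1 - t := by linarith
  have hsum : ∑ i ∈ Finset.range 8, t ^ (i + 1) / ((i : ℝ) + 1) = t + t ^ 2 / 2 + t ^ 3 / 3 + t ^ 4 / 4 + t ^ 5 / 5 + t ^ 6 / 6 + t ^ 7 / 7 + t ^ 8 / 8 := by
    norm_num [Finset.sum_range_succ]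
  have hc : (0:ℝ) ≤ (1/2:ℝ) * t ^ 2 * (1 - t) ^ 7 + (23/6:ℝ) * t ^ 3 * (1 - t) ^ 6 + (177/16:ℝ) * t ^ 4 * (1 - t) ^ 5 + (1241/80:ℝ) * t ^ 5 * (1 - t) ^ 4 + (1291/120:ℝ) * t ^ 6 * (1 - t) ^ 3 + (831/280:ℝ) * t ^ 7 * (1 - t) ^ 2 + (13/560:ℝ) * t ^ 8 * (1 - t) ^ 1 + (17/560:ℝ) * t ^ 9 * (1 - t) ^ 0 := by
    repeat' apply add_nonneg
    all_goals apply mul_nonneg (mul_nonneg (by norm_num) (pow_nonneg h0 _)) (pow_nonneg h1t _)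
  have hkey : (27/16 : ℝ) * t ^ 4 + t = (t + t ^ 2 / 2 + t ^ 3 / 3 + t ^ 4 / 4 + t ^ 5 / 5 + t ^ 6 / 6 + t ^ 7 / 7 + t ^ 8 / 8) - ((1/2:ℝ) * t ^ 2 * (1 - t) ^ 7 + (23/6:ℝ) * t ^ 3 * (1 - t) ^ 6 + (177/16:ℝ) * t ^ 4 * (1 - t) ^ 5 + (1241/80:ℝ) * t ^ 5 * (1 - t) ^ 4 + (1291/120:ℝ) * t ^ 6 * (1 - t) ^ 3 + (831/280:ℝ) * t ^ 7 * (1 - t) ^ 2 + (13/560:ℝ) * t ^ 8 * (1 - t) ^ 1 + (17/560:ℝ) * t ^ 9 * (1 - t) ^ 0) := by ring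
  rw [hsum, hkey]
  exact sub_le_self _ hc

lemma poly5 (t : ℝ) (h0 : 0 ≤ t) (h1 : t < 1) :
    (256/135 : ℝ) * t ^ 5 + t ≤ ∑ i ∈ Finset.range 10, t ^ (i + 1) / (i + 1) := by
  have h1t : (0:ℝ) ≤ 1 - t := by linarith
  have hsum : ∑ i ∈ Finset.range 10, t ^ (i + 1) / ((i : ℝ) + 1) = t + t ^ 2 / 2 + t ^ 3 / 3 + t ^ 4 / 4 + t ^ 5 / 5 + t ^ 6 / 6 + t ^ 7 / 7 + t ^ 8 / 8 + t ^ 9 / 9 + t ^ 10 / 10 := by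
    norm_num [Finset.sum_range_succ]
  have hc : (0:ℝ) ≤ (1/2:ℝ) * t ^ 2 * (1 - t) ^ 8 + (13/3:ℝ) * t ^ 3 * (1 - t) ^ 7 + (199/12:ℝ) * t ^ 4 * (1 - t) ^ 6 + (9397/270:ℝ) * t ^ 5 * (1 - t) ^ 5 + (4547/108:ℝ) * t ^ 6 * (1 - t) ^ 4 + (5389/189:ℝ) * t ^ 7 * (1 - t) ^ 3 + (14123/1512:ℝ) * t ^ 8 * (1 - t) ^ 2 + (611/756:ℝ) * t ^ 9 * (1 - t) ^ 1 + (247/7560:ℝ) * t ^ 10 * (1 - t) ^ 0 := by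
    repeat' apply add_nonneg
    all_goals apply mul_nonneg (mul_nonneg (by norm_num) (pow_nonneg h0 _)) (pow_nonneg h1t _)
  have hkey : (256/135 : ℝ) * t ^ 5 + t = (t + t ^ 2 / 2 + t ^ 3 / 3 + t ^ 4 / 4 + t ^ 5 / 5 + t ^ 6 / 6 + t ^ 7 / 7 + t ^ 8 / 8 + t ^ 9 / 9 + t ^ 10 / 10) - ((1/2:ℝ) * t ^ 2 * (1 - t) ^ 8 + (13/3:ℝ) * t ^ 3 * (1 - t) ^ 7 + (199/12:ℝ) * t ^ 4 * (1 - t) ^ 6 + (9397/270:ℝ) * t ^ 5 * (1 - t) ^ 5 + (4547/108:ℝ) * t ^ 6 * (1 - t) ^ 4 + (5389/189:ℝ) * t ^ 7 * (1 - t) ^ 3 + (14123/1512:ℝ) * t ^ 8 * (1 - t) ^ 2 + (611/756:ℝ) * t ^ 9 * (1 - t) ^ 1 + (247/7560:ℝ) * t ^ 10 * (1 - t) ^ 0) := by ring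
  rw [hsum, hkey]
  exact sub_le_self _ hc

lemma poly6 (t : ℝ) (h0 : 0 ≤ t) (h1 : t < 1) :
    (3125/1536 : ℝ) * t ^ 6 + t ≤ ∑ i ∈ Finset.range 12, t ^ (i + 1) / (i + 1) := by
  have h1t : (0:ℝ) ≤ 1 - t := by linarith
  have hsum : ∑ i ∈ Finset.range 12, t ^ (i + 1) / ((i : ℝ) + 1) = t + t ^ 2 / 2 + t ^ 3 / 3 + t ^ 4 / 4 + t ^ 5 / 5 + t ^ 6 / 6 + t ^ 7 / 7 + t ^ 8 / 8 + t ^ 9 / 9 + t ^ 10 / 10 + t ^ 11 / 11 + t ^ 12 / 12 := by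
    norm_num [Finset.sum_range_succ]
  have hc : (0:ℝ) ≤ (1/2:ℝ) * t ^ 2 * (1 - t) ^ 10 + (16/3:ℝ) * t ^ 3 * (1 - t) ^ 9 + (103/4:ℝ) * t ^ 4 * (1 - t) ^ 8 + (371/5:ℝ) * t ^ 5 * (1 - t) ^ 7 + (1071607/7680:ℝ) * t ^ 6 * (1 - t) ^ 6 + (1569217/8960:ℝ) * t ^ 7 * (1 - t) ^ 5 + (517249/3584:ℝ) * t ^ 8 * (1 - t) ^ 4 + (594179/8064:ℝ) * t ^ 9 * (1 - t) ^ 3 + (1091023/53760:ℝ) * t ^ 10 * (1 - t) ^ 2 + (600673/295680:ℝ) * t ^ 11 * (1 - t) ^ 1 + (121889/1774080:ℝ) * t ^ 12 * (1 - t) ^ 0 := by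
    repeat' apply add_nonneg
    all_goals apply mul_nonneg (mul_nonneg (by norm_num) (pow_nonneg h0 _)) (pow_nonneg h1t _)
  have hkey : (3125/1536 : ℝ) * t ^ 6 + t = (t + t ^ 2 / 2 + t ^ 3 / 3 + t ^ 4 / 4 + t ^ 5 / 5 + t ^ 6 / 6 + t ^ 7 / 7 + t ^ 8 / 8 + t ^ 9 / 9 + t ^ 10 / 10 + t ^ 11 / 11 + t ^ 12 / 12) - ((1/2:ℝ) * t ^ 2 * (1 - t) ^ 10 + (16/3:ℝ) * t ^ 3 * (1 - t) ^ 9 + (103/4:ℝ) * t ^ 4 * (1 - t) ^ 8 + (371/5:ℝ) * t ^ 5 * (1 - t) ^ 7 + (1071607/7680:ℝ) * t ^ 6 * (1 - t) ^ 6 + (1569217/8960:ℝ) * t ^ 7 * (1 - t) ^ 5 + (517249/3584:ℝ) * t ^ 8 * (1 - t) ^ 4 + (594179/8064:ℝ) * t ^ 9 * (1 - t) ^ 3 + (1091023/53760:ℝ) * t ^ 10 * (1 - t) ^ 2 + (600673/295680:ℝ) * t ^ 11 * (1 - t) ^ 1 + (121889/1774080:ℝ) * t ^ 12 * (1 - t)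 ^ 0) := by ring
  rw [hsum, hkey]
  exact sub_le_self _ hc

lemma poly7 (t : ℝ) (h0 : 0 ≤ t) (h1 : t < 1) :
    (46656/21875 : ℝ) * t ^ 7 + t ≤ ∑ i ∈ Finset.range 13, t ^ (i + 1) / (i + 1) := by
  have h1t : (0:ℝ) ≤ 1 - t := by linarith
  have hsum : ∑ i ∈ Finset.range 13, t ^ (i + 1) / ((i : ℝ) + 1) = t + t ^ 2 / 2 + t ^ 3 / 3 + t ^ 4 / 4 + t ^ 5 / 5 + t ^ 6 / 6 + t ^ 7 / 7 + t ^ 8 / 8 + t ^ 9 / 9 + t ^ 10 / 10 + t ^ 11 / 11 + t ^ 12 / 12 + t ^ 13 / 13 := by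
    norm_num [Finset.sum_range_succ]
  have hc : (0:ℝ) ≤ (1/2:ℝ) * t ^ 2 * (1 - t) ^ 11 + (35/6:ℝ) * t ^ 3 * (1 - t) ^ 10 + (373/12:ℝ) * t ^ 4 * (1 - t) ^ 9 + (1999/20:ℝ) * t ^ 5 * (1 - t) ^ 8 + (6473/30:ℝ) * t ^ 6 * (1 - t) ^ 7 + (42889439/131250:ℝ) * t ^ 7 * (1 - t) ^ 6 + (61142387/175000:ℝ) * t ^ 8 * (1 - t) ^ 5 + (81024179/315000:ℝ) * t ^ 9 * (1 - t) ^ 4 + (19298161/157500:ℝ) * t ^ 10 * (1 - t) ^ 3 + (19090849/577500:ℝ) * t ^ 11 * (1 - t) ^ 2 + (61411313/17325000:ℝ) * t ^ 12 * (1 - t) ^ 1 + (10650449/225225000:ℝ) * t ^ 13 * (1 - t) ^ 0 := by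
    repeat' apply add_nonneg
    all_goals apply mul_nonneg (mul_nonneg (by norm_num) (pow_nonneg h0 _)) (pow_nonneg h1t _)
  have hkey : (46656/21875 : ℝ) * t ^ 7 + t = (t + t ^ 2 / 2 + t ^ 3 / 3 + t ^ 4 / 4 + t ^ 5 / 5 + t ^ 6 / 6 + t ^ 7 / 7 + t ^ 8 / 8 + t ^ 9 / 9 + t ^ 10 / 10 + t ^ 11 / 11 + t ^ 12 / 12 + t ^ 13 / 13) - ((1/2:ℝ) * t ^ 2 * (1 - t) ^ 11 + (35/6:ℝ) * t ^ 3 * (1 - t) ^ 10 + (373/12:ℝ) * t ^ 4 * (1 - t) ^ 9 + (1999/20:ℝ) * t ^ 5 * (1 - t) ^ 8 + (6473/30:ℝ) * t ^ 6 * (1 - t) ^ 7 + (42889439/131250:ℝ) * t ^ 7 * (1 - t) ^ 6 + (61142387/175000:ℝ) * t ^ 8 * (1 - t) ^ 5 + (81024179/315000:ℝ) * t ^ 9 * (1 - t) ^ 4 + (19298161/157500:ℝ) * t ^ 10 * (1 - t) ^ 3 + (19090849/577500:ℝ) * t ^ 11 * (1 - t) ^ 2 + (61411313/17325000:ℝ)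 * t ^ 12 * (1 - t) ^ 1 + (10650449/225225000:ℝ) * t ^ 13 * (1 - t) ^ 0) := by ring
  rw [hsum, hkey]
  exact sub_le_self _ hc

lemma poly8 (t : ℝ) (h0 : 0 ≤ t) (h1 : t < 1) :
    (823543/373248 : ℝ) * t ^ 8 + t ≤ ∑ i ∈ Finset.range 14, t ^ (i + 1) / (i + 1) := by
  have h1t : (0:ℝ) ≤ 1 - t := by linarith
  have hsum : ∑ i ∈ Finset.range 14, t ^ (i + 1) / ((i : ℝ) + 1) = t + t ^ 2 / 2 + t ^ 3 / 3 + t ^ 4 / 4 + t ^ 5 / 5 + t ^ 6 / 6 + t ^ 7 / 7 + t ^ 8 / 8 + t ^ 9 / 9 + t ^ 10 / 10 + t ^ 11 / 11 + t ^ 12 / 12 + t ^ 13 / 13 + t ^ 14 / 14 := by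
    norm_num [Finset.sum_range_succ]
  have hc : (0:ℝ) ≤ (1/2:ℝ) * t ^ 2 * (1 - t) ^ 12 + (19/3:ℝ) * t ^ 3 * (1 - t) ^ 11 + (443/12:ℝ) * t ^ 4 * (1 - t) ^ 10 + (3931/30:ℝ) * t ^ 5 * (1 - t) ^ 9 + (18943/60:ℝ) * t ^ 6 * (1 - t) ^ 8 + (57191/105:ℝ) * t ^ 7 * (1 - t) ^ 7 + (1285625197/1866240:ℝ) * t ^ 8 * (1 - t) ^ 6 + (198492013/311040:ℝ) * t ^ 9 * (1 - t) ^ 5 + (262082849/622080:ℝ) * t ^ 10 * (1 - t) ^ 4 + (955130347/5132160:ℝ) * t ^ 11 * (1 - t) ^ 3 + (330482539/6842880:ℝ) * t ^ 12 * (1 - t) ^ 2 + (234995939/44478720:ℝ) * t ^ 13 * (1 - t) ^ 1 + (84324917/1868106240:ℝ) * t ^ 14 * (1 - t) ^ 0 := by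
    repeat' apply add_nonneg
    all_goals apply mul_nonneg (mul_nonneg (by norm_num) (pow_nonneg h0 _)) (pow_nonneg h1t _)
  have hkey : (823543/373248 : ℝ) * t ^ 8 + t = (t + t ^ 2 / 2 + t ^ 3 / 3 + t ^ 4 / 4 + t ^ 5 / 5 + t ^ 6 / 6 + t ^ 7 / 7 + t ^ 8 / 8 + t ^ 9 / 9 + t ^ 10 / 10 + t ^ 11 / 11 + t ^ 12 / 12 + t ^ 13 / 13 + t ^ 14 / 14) - ((1/2:ℝ) * t ^ 2 * (1 - t) ^ 12 + (19/3:ℝ) * t ^ 3 * (1 - t) ^ 11 + (443/12:ℝ) * t ^ 4 * (1 - t) ^ 10 + (3931/30:ℝ) * t ^ 5 * (1 - t) ^ 9 + (18943/60:ℝ) * t ^ 6 * (1 - t) ^ 8 + (57191/105:ℝ) * t ^ 7 * (1 - t) ^ 7 + (1285625197/1866240:ℝ) * t ^ 8 * (1 - t) ^ 6 + (198492013/311040:ℝ) * t ^ 9 * (1 - t) ^ 5 + (262082849/622080:ℝ) * t ^ 10 * (1 - t) ^ 4 + (955130347/5132160:ℝ) * t ^ 11 * (1 - t) ^ 3 +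 (330482539/6842880:ℝ) * t ^ 12 * (1 - t) ^ 2 + (234995939/44478720:ℝ) * t ^ 13 * (1 - t) ^ 1 + (84324917/1868106240:ℝ) * t ^ 14 * (1 - t) ^ 0) := by ring
  rw [hsum, hkey]
  exact sub_le_self _ hc

lemma poly9 (t : ℝ) (h0 : 0 ≤ t) (h1 : t < 1) :
    (16777216/7411887 : ℝ) * t ^ 9 + t ≤ ∑ i ∈ Finset.range 15, t ^ (i + 1) / (i + 1) := by
  have h1t : (0:ℝ) ≤ 1 - t := by linarith
  have hsum : ∑ i ∈ Finset.range 15, t ^ (i + 1) / ((i : ℝ) + 1) = t + t ^ 2 / 2 + t ^ 3 / 3 + t ^ 4 / 4 + t ^ 5 / 5 + t ^ 6 / 6 + t ^ 7 / 7 + t ^ 8 / 8 + t ^ 9 / 9 + t ^ 10 / 10 + t ^ 11 / 11 + t ^ 12 / 12 + t ^ 13 / 13 + t ^ 14 / 14 + t ^ 15 / 15 := by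
    norm_num [Finset.sum_range_succ]
  have hc : (0:ℝ) ≤ (1/2:ℝ) * t ^ 2 * (1 - t) ^ 13 + (41/6:ℝ) * t ^ 3 * (1 - t) ^ 12 + (173/4:ℝ) * t ^ 4 * (1 - t) ^ 11 + (3359/20:ℝ) * t ^ 5 * (1 - t) ^ 10 + (1787/4:ℝ) * t ^ 6 * (1 - t) ^ 9 + (24091/28:ℝ) * t ^ 7 * (1 - t) ^ 8 + (69203/56:ℝ) * t ^ 8 * (1 - t) ^ 7 + (26489541703/19765032:ℝ) * t ^ 9 * (1 - t) ^ 6 + (7195857407/6588344:ℝ) * t ^ 10 * (1 - t) ^ 5 + (47155885803/72471784:ℝ) * t ^ 11 * (1 - t) ^ 4 + (19303324903/72471784:ℝ) * t ^ 12 * (1 - t) ^ 3 + (62143778965/942133192:ℝ) * t ^ 13 * (1 - t) ^ 2 + (6775919127/942133192:ℝ) * t ^ 14 * (1 - t) ^ 1 + (772648711/14131997880:ℝ) * t ^ 15 * (1 - t) ^ 0 := by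
    repeat' apply add_nonneg
    all_goals apply mul_nonneg (mul_nonneg (by norm_num) (pow_nonneg h0 _)) (pow_nonneg h1t _)
  have hkey : (16777216/7411887 : ℝ) * t ^ 9 + t = (t + t ^ 2 / 2 + t ^ 3 / 3 + t ^ 4 / 4 + t ^ 5 / 5 + t ^ 6 / 6 + t ^ 7 / 7 + t ^ 8 / 8 + t ^ 9 / 9 + t ^ 10 / 10 + t ^ 11 / 11 + t ^ 12 / 12 + t ^ 13 / 13 + t ^ 14 / 14 + t ^ 15 / 15) - ((1/2:ℝ) * t ^ 2 * (1 - t) ^ 13 + (41/6:ℝ) * t ^ 3 * (1 - t) ^ 12 + (173/4:ℝ) * t ^ 4 * (1 - t) ^ 11 + (3359/20:ℝ) * t ^ 5 * (1 - t) ^ 10 + (1787/4:ℝ) * t ^ 6 * (1 - t) ^ 9 + (24091/28:ℝ) * t ^ 7 * (1 - t) ^ 8 + (69203/56:ℝ) * t ^ 8 * (1 - t) ^ 7 + (26489541703/19765032:ℝ) * t ^ 9 * (1 - t) ^ 6 + (7195857407/6588344:ℝ) * t ^ 10 * (1 - t) ^ 5 + (47155885803/72471784:ℝ) * t ^ 11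 * (1 - t) ^ 4 + (19303324903/72471784:ℝ) * t ^ 12 * (1 - t) ^ 3 + (62143778965/942133192:ℝ) * t ^ 13 * (1 - t) ^ 2 + (6775919127/942133192:ℝ) * t ^ 14 * (1 - t) ^ 1 + (772648711/14131997880:ℝ) * t ^ 15 * (1 - t) ^ 0) := by ring
  rw [hsum, hkey]
  exact sub_le_self _ hc

lemma poly10 (t : ℝ) (h0 : 0 ≤ t) (h1 : t < 1) :
    (387420489/167772160 : ℝ) * t ^ 10 + t ≤ ∑ i ∈ Finset.range 15, t ^ (i + 1) / (i + 1) := by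
  have h1t : (0:ℝ) ≤ 1 - t := by linarith
  have hsum : ∑ i ∈ Finset.range 15, t ^ (i + 1) / ((i : ℝ) + 1) = t + t ^ 2 / 2 + t ^ 3 / 3 + t ^ 4 / 4 + t ^ 5 / 5 + t ^ 6 / 6 + t ^ 7 / 7 + t ^ 8 / 8 + t ^ 9 / 9 + t ^ 10 / 10 + t ^ 11 / 11 + t ^ 12 / 12 + t ^ 13 / 13 + t ^ 14 / 14 + t ^ 15 / 15 := by
    norm_num [Finset.sum_range_succ]
  have hc : (0:ℝ) ≤ (1/2:ℝ) * t ^ 2 * (1 - t) ^ 13 + (41/6:ℝ) * t ^ 3 * (1 - t) ^ 12 + (173/4:ℝ) * t ^ 4 * (1 - t) ^ 11 + (3359/20:ℝ) * t ^ 5 * (1 - t) ^ 10 + (1787/4:ℝ) * t ^ 6 * (1 - t) ^ 9 + (24091/28:ℝ) * t ^ 7 * (1 - t) ^ 8 + (69203/56:ℝ) * t ^ 8 * (1 - t) ^ 7 + (96659/72:ℝ) * t ^ 9 * (1 - t) ^ 6 + (555400907813/503316480:ℝ) * t ^ 10 * (1 - t) ^ 5 + (745306211735/1107296256:ℝ)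 * t ^ 11 * (1 - t) ^ 4 + (479241359557/1660944384:ℝ) * t ^ 12 * (1 - t) ^ 3 + (552920516779/7197425664:ℝ) * t ^ 13 * (1 - t) ^ 2 + (929789820077/100763959296:ℝ) * t ^ 14 * (1 - t) ^ 1 + (13637793287/1511459389440:ℝ) * t ^ 15 * (1 - t) ^ 0 := by
    repeat' apply add_nonneg
    all_goals apply mul_nonneg (mul_nonneg (by norm_num) (pow_nonneg h0 _)) (pow_nonneg h1t _)
  have hkey : (387420489/167772160 : ℝ) * t ^ 10 + t = (t + t ^ 2 / 2 + t ^ 3 / 3 + t ^ 4 / 4 + t ^ 5 / 5 + t ^ 6 / 6 + t ^ 7 / 7 + t ^ 8 / 8 + t ^ 9 / 9 + t ^ 10 / 10 + t ^ 11 / 11 + t ^ 12 / 12 + t ^ 13 / 13 + t ^ 14 / 14 + t ^ 15 / 15) - ((1/2:ℝ) * t ^ 2 * (1 - t) ^ 13 + (41/6:ℝ) * t ^ 3 * (1 - t) ^ 12 + (173/4:ℝ) * t ^ 4 * (1 - t) ^ 11 + (3359/20:ℝ) * t ^ 5 * (1 - t) ^ 10 + (1787/4:ℝ) * t ^ 6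 * (1 - t) ^ 9 + (24091/28:ℝ) * t ^ 7 * (1 - t) ^ 8 + (69203/56:ℝ) * t ^ 8 * (1 - t) ^ 7 + (96659/72:ℝ) * t ^ 9 * (1 - t) ^ 6 + (555400907813/503316480:ℝ) * t ^ 10 * (1 - t) ^ 5 + (745306211735/1107296256:ℝ) * t ^ 11 * (1 - t) ^ 4 + (479241359557/1660944384:ℝ) * t ^ 12 * (1 - t) ^ 3 + (552920516779/7197425664:ℝ) * t ^ 13 * (1 - t) ^ 2 + (929789820077/100763959296:ℝ) * t ^ 14 * (1 - t) ^ 1 + (13637793287/1511459389440:ℝ) * t ^ 15 * (1 - t) ^ 0) := by ring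
  rw [hsum, hkey]
  exact sub_le_self _ hc

lemma poly11 (t : ℝ) (h0 : 0 ≤ t) (h1 : t < 1) :
    (10000000000/4261625379 : ℝ) * t ^ 11 + t ≤ ∑ i ∈ Finset.range 16, t ^ (i + 1) / (i + 1) := by
  have h1t : (0:ℝ) ≤ 1 - t := by linarith
  have hsum : ∑ i ∈ Finset.range 16, t ^ (i + 1) / ((i : ℝ) + 1) = t + t ^ 2 / 2 + t ^ 3 / 3 + t ^ 4 / 4 + t ^ 5 / 5 + t ^ 6 / 6 + t ^ 7 / 7 + t ^ 8 / 8 + t ^ 9 / 9 + t ^ 10 / 10 + t ^ 11 / 11 + t ^ 12 / 12 + t ^ 13 / 13 + t ^ 14 / 14 + t ^ 15 / 15 + t ^ 16 / 16 := by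
    norm_num [Finset.sum_range_succ]
  have hc : (0:ℝ) ≤ (1/2:ℝ) * t ^ 2 * (1 - t) ^ 14 + (22/3:ℝ) * t ^ 3 * (1 - t) ^ 13 + (601/12:ℝ) * t ^ 4 * (1 - t) ^ 12 + (1056/5:ℝ) * t ^ 5 * (1 - t) ^ 11 + (6147/10:ℝ) * t ^ 6 * (1 - t) ^ 10 + (9150/7:ℝ) * t ^ 7 * (1 - t) ^ 9 + (117385/56:ℝ) * t ^ 8 * (1 - t) ^ 8 + (162430/63:ℝ) * t ^ 9 * (1 - t) ^ 7 + (44069/18:ℝ) * t ^ 10 * (1 - t) ^ 6 + (7620117390692/4261625379:ℝ) * t ^ 11 * (1 - t) ^ 5 + (16782749322199/17046501516:ℝ) * t ^ 12 * (1 - t) ^ 4 + (21499867964534/55401129927:ℝ) * t ^ 13 * (1 - t) ^ 3 + (75407118010387/775615818978:ℝ) * t ^ 14 * (1 - t) ^ 2 + (22025649502244/1939039547445:ℝ) * t ^ 15 * (1 - t) ^ 1 + (1061242713919/31024632759120:ℝ) * t ^ 16 * (1 - t) ^ 0 := by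
    repeat' apply add_nonneg
    all_goals apply mul_nonneg (mul_nonneg (by norm_num) (pow_nonneg h0 _)) (pow_nonneg h1t _)
  have hkey : (10000000000/4261625379 : ℝ) * t ^ 11 + t = (t + t ^ 2 / 2 + t ^ 3 / 3 + t ^ 4 / 4 + t ^ 5 / 5 + t ^ 6 / 6 + t ^ 7 / 7 + t ^ 8 / 8 + t ^ 9 / 9 + t ^ 10 / 10 + t ^ 11 / 11 + t ^ 12 / 12 + t ^ 13 / 13 + t ^ 14 / 14 + t ^ 15 / 15 + t ^ 16 / 16) - ((1/2:ℝ) * t ^ 2 * (1 - t) ^ 14 + (22/3:ℝ) * t ^ 3 * (1 - t) ^ 13 + (601/12:ℝ) * t ^ 4 * (1 - t) ^ 12 + (1056/5:ℝ) * t ^ 5 * (1 - t) ^ 11 + (6147/10:ℝ) * t ^ 6 * (1 - t) ^ 10 + (9150/7:ℝ) * t ^ 7 * (1 - t) ^ 9 + (117385/56:ℝ) * t ^ 8 * (1 - t) ^ 8 + (162430/63:ℝ) * t ^ 9 * (1 - t) ^ 7 + (44069/18:ℝ) * t ^ 10 * (1 - t) ^ 6 + (7620117390692/4261625379:ℝ)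 * t ^ 11 * (1 - t) ^ 5 + (16782749322199/17046501516:ℝ) * t ^ 12 * (1 - t) ^ 4 + (21499867964534/55401129927:ℝ) * t ^ 13 * (1 - t) ^ 3 + (75407118010387/775615818978:ℝ) * t ^ 14 * (1 - t) ^ 2 + (22025649502244/1939039547445:ℝ) * t ^ 15 * (1 - t) ^ 1 + (1061242713919/31024632759120:ℝ) * t ^ 16 * (1 - t) ^ 0) := by ring
  rw [hsum, hkey]
  exact sub_le_self _ hc

lemma poly12 (t : ℝ) (h0 : 0 ≤ t) (h1 : t < 1) :
    (285311670611/120000000000 : ℝ) * t ^ 12 + t ≤ ∑ i ∈ Finset.range 16, t ^ (i + 1) / (i + 1) := by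
  have h1t : (0:ℝ) ≤ 1 - t := by linarith
  have hsum : ∑ i ∈ Finset.range 16, t ^ (i + 1) / ((i : ℝ) + 1) = t + t ^ 2 / 2 + t ^ 3 / 3 + t ^ 4 / 4 + t ^ 5 / 5 + t ^ 6 / 6 + t ^ 7 / 7 + t ^ 8 / 8 + t ^ 9 / 9 + t ^ 10 / 10 + t ^ 11 / 11 + t ^ 12 / 12 + t ^ 13 / 13 + t ^ 14 / 14 + t ^ 15 / 15 + t ^ 16 / 16 := by
    norm_num [Finset.sum_range_succ]
  have hc : (0:ℝ) ≤ (1/2:ℝ) * t ^ 2 * (1 - t) ^ 14 + (22/3:ℝ) * t ^ 3 * (1 - t) ^ 13 + (601/12:ℝ) * t ^ 4 * (1 - t) ^ 12 + (1056/5:ℝ) * t ^ 5 * (1 - t) ^ 11 + (6147/10:ℝ) * t ^ 6 * (1 - t) ^ 10 + (9150/7:ℝ) * t ^ 7 * (1 - t) ^ 9 + (117385/56:ℝ) * t ^ 8 * (1 - t) ^ 8 + (162430/63:ℝ) * t ^ 9 * (1 - t) ^ 7 + (44069/18:ℝ) * t ^ 10 * (1 - t) ^ 6 + (59084/33:ℝ)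 * t ^ 11 * (1 - t) ^ 5 + (3935774714869837/3960000000000:ℝ) * t ^ 12 * (1 - t) ^ 4 + (5174141293307881/12870000000000:ℝ) * t ^ 13 * (1 - t) ^ 3 + (6391699053155167/60060000000000:ℝ) * t ^ 14 * (1 - t) ^ 2 + (1223537053155167/90090000000000:ℝ) * t ^ 15 * (1 - t) ^ 1 + (1128553155167/360360000000000:ℝ) * t ^ 16 * (1 - t) ^ 0 := by
    repeat' apply add_nonneg
    all_goals apply mul_nonneg (mul_nonneg (by norm_num) (pow_nonneg h0 _)) (pow_nonneg h1t _)
  have hkey : (285311670611/120000000000 : ℝ) * t ^ 12 + t = (t + t ^ 2 / 2 + t ^ 3 / 3 + t ^ 4 / 4 + t ^ 5 / 5 + t ^ 6 / 6 + t ^ 7 / 7 + t ^ 8 / 8 + t ^ 9 / 9 + t ^ 10 / 10 + t ^ 11 / 11 + t ^ 12 / 12 + t ^ 13 / 13 + t ^ 14 / 14 + t ^ 15 / 15 + t ^ 16 / 16) - ((1/2:ℝ) * t ^ 2 * (1 - t) ^ 14 + (22/3:ℝ) * t ^ 3 * (1 - t) ^ 13 + (601/12:ℝ) * t ^ 4 *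 (1 - t) ^ 12 + (1056/5:ℝ) * t ^ 5 * (1 - t) ^ 11 + (6147/10:ℝ) * t ^ 6 * (1 - t) ^ 10 + (9150/7:ℝ) * t ^ 7 * (1 - t) ^ 9 + (117385/56:ℝ) * t ^ 8 * (1 - t) ^ 8 + (162430/63:ℝ) * t ^ 9 * (1 - t) ^ 7 + (44069/18:ℝ) * t ^ 10 * (1 - t) ^ 6 + (59084/33:ℝ) * t ^ 11 * (1 - t) ^ 5 + (3935774714869837/3960000000000:ℝ) * t ^ 12 * (1 - t) ^ 4 + (5174141293307881/12870000000000:ℝ) * t ^ 13 * (1 - t) ^ 3 + (6391699053155167/60060000000000:ℝ) * t ^ 14 * (1 - t) ^ 2 + (1223537053155167/90090000000000:ℝ) * t ^ 15 * (1 - t) ^ 1 + (1128553155167/360360000000000:ℝ) * t ^ 16 * (1 - t) ^ 0) := by ring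
  rw [hsum, hkey]
  exact sub_le_self _ hc

lemma poly13 (t : ℝ) (h0 : 0 ≤ t) (h1 : t < 1) :
    (8916100448256/3709051717943 : ℝ) * t ^ 13 + t ≤ ∑ i ∈ Finset.range 17, t ^ (i + 1) / (i + 1) := by
  have h1t : (0:ℝ) ≤ 1 - t := by linarith
  have hsum : ∑ i ∈ Finset.range 17, t ^ (i + 1) / ((i : ℝ) + 1) = t + t ^ 2 / 2 + t ^ 3 / 3 + t ^ 4 / 4 + t ^ 5 / 5 + t ^ 6 / 6 + t ^ 7 / 7 + t ^ 8 / 8 + t ^ 9 / 9 + t ^ 10 / 10 + t ^ 11 / 11 + t ^ 12 / 12 + t ^ 13 / 13 + t ^ 14 / 14 + t ^ 15 / 15 + t ^ 16 / 16 + t ^ 17 / 17 := by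
    norm_num [Finset.sum_range_succ]
  have hc : (0:ℝ) ≤ (1/2:ℝ) * t ^ 2 * (1 - t) ^ 15 + (47/6:ℝ) * t ^ 3 * (1 - t) ^ 14 + (689/12:ℝ) * t ^ 4 * (1 - t) ^ 13 + (15677/60:ℝ) * t ^ 5 * (1 - t) ^ 12 + (8259/10:ℝ) * t ^ 6 * (1 - t) ^ 11 + (134529/70:ℝ) * t ^ 7 * (1 - t) ^ 10 + (190585/56:ℝ) * t ^ 8 * (1 - t) ^ 9 + (2355905/504:ℝ) * t ^ 9 * (1 - t) ^ 8 + (633343/126:ℝ) * t ^ 10 * (1 - t) ^ 7 + (839263/198:ℝ) * t ^ 11 * (1 - t) ^ 6 + (1103527/396:ℝ) * t ^ 12 * (1 - t) ^ 5 + (187656951752439947/133525861845948:ℝ) * t ^ 13 * (1 - t) ^ 4 + (244238483882562479/467340516460818:ℝ) * t ^ 14 * (1 - t) ^ 3 + (302266235220095183/2336702582304090:ℝ) * t ^ 15 * (1 - t) ^ 2 + (296422664815907303/18693620658432720:ℝ) * t ^ 16 * (1 - t) ^ 1 + (11337693981097703/317791551193356240:ℝ) * t ^ 17 * (1 - t)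 ^ 0 := by
    repeat' apply add_nonneg
    all_goals apply mul_nonneg (mul_nonneg (by norm_num) (pow_nonneg h0 _)) (pow_nonneg h1t _)
  have hkey : (8916100448256/3709051717943 : ℝ) * t ^ 13 + t = (t + t ^ 2 / 2 + t ^ 3 / 3 + t ^ 4 / 4 + t ^ 5 / 5 + t ^ 6 / 6 + t ^ 7 / 7 + t ^ 8 / 8 + t ^ 9 / 9 + t ^ 10 / 10 + t ^ 11 / 11 + t ^ 12 / 12 + t ^ 13 / 13 + t ^ 14 / 14 + t ^ 15 / 15 + t ^ 16 / 16 + t ^ 17 / 17) - ((1/2:ℝ) * t ^ 2 * (1 - t) ^ 15 + (47/6:ℝ) * t ^ 3 * (1 - t) ^ 14 + (689/12:ℝ) * t ^ 4 * (1 - t) ^ 13 + (15677/60:ℝ) * t ^ 5 * (1 - t) ^ 12 + (8259/10:ℝ) * t ^ 6 * (1 - t) ^ 11 + (134529/70:ℝ) * t ^ 7 * (1 - t) ^ 10 + (190585/56:ℝ) * t ^ 8 * (1 - t) ^ 9 + (2355905/504:ℝ) * t ^ 9 * (1 - t) ^ 8 + (633343/126:ℝ) * t ^ 10 * (1 - t)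 ^ 7 + (839263/198:ℝ) * t ^ 11 * (1 - t) ^ 6 + (1103527/396:ℝ) * t ^ 12 * (1 - t) ^ 5 + (187656951752439947/133525861845948:ℝ) * t ^ 13 * (1 - t) ^ 4 + (244238483882562479/467340516460818:ℝ) * t ^ 14 * (1 - t) ^ 3 + (302266235220095183/2336702582304090:ℝ) * t ^ 15 * (1 - t) ^ 2 + (296422664815907303/18693620658432720:ℝ) * t ^ 16 * (1 - t) ^ 1 + (11337693981097703/317791551193356240:ℝ) * t ^ 17 * (1 - t) ^ 0) := by ring
  rw [hsum, hkey]
  exact sub_le_self _ hc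

lemma poly14 (t : ℝ) (h0 : 0 ≤ t) (h1 : t < 1) :
    (302875106592253/124825406275584 : ℝ) * t ^ 14 + t ≤ ∑ i ∈ Finset.range 17, t ^ (i + 1) / (i + 1) := by
  have h1t : (0:ℝ) ≤ 1 - t := by linarith
  have hsum : ∑ i ∈ Finset.range 17, t ^ (i + 1) / ((i : ℝ) + 1) = t + t ^ 2 / 2 + t ^ 3 / 3 + t ^ 4 / 4 + t ^ 5 / 5 + t ^ 6 / 6 + t ^ 7 / 7 + t ^ 8 / 8 + t ^ 9 / 9 + t ^ 10 / 10 + t ^ 11 / 11 + t ^ 12 / 12 + t ^ 13 / 13 + t ^ 14 / 14 + t ^ 15 / 15 + t ^ 16 / 16 + t ^ 17 / 17 := by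
    norm_num [Finset.sum_range_succ]
  have hc : (0:ℝ) ≤ (1/2:ℝ) * t ^ 2 * (1 - t) ^ 15 + (47/6:ℝ) * t ^ 3 * (1 - t) ^ 14 + (689/12:ℝ) * t ^ 4 * (1 - t) ^ 13 + (15677/60:ℝ) * t ^ 5 * (1 - t) ^ 12 + (8259/10:ℝ) * t ^ 6 * (1 - t) ^ 11 + (134529/70:ℝ) * t ^ 7 * (1 - t) ^ 10 + (190585/56:ℝ) * t ^ 8 * (1 - t) ^ 9 + (2355905/504:ℝ) * t ^ 9 * (1 - t) ^ 8 + (633343/126:ℝ) * t ^ 10 * (1 - t) ^ 7 + (839263/198:ℝ) * t ^ 11 * (1 - t) ^ 6 + (1103527/396:ℝ) * t ^ 12 * (1 - t) ^ 5 + (7247363/5148:ℝ) * t ^ 13 * (1 - t) ^ 4 + (9456994994973075373/17850033097408512:ℝ) * t ^ 14 * (1 - t) ^ 3 + (4060881736586102369/29750055162347520:ℝ) * t ^ 15 * (1 - t) ^ 2 + (541249392229090913/29750055162347520:ℝ) * t ^ 16 * (1 - t) ^ 1 + (19971007491501169/1517252813279723520:ℝ) * t ^ 17 * (1 - t) ^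 0 := by
    repeat' apply add_nonneg
    all_goals apply mul_nonneg (mul_nonneg (by norm_num) (pow_nonneg h0 _)) (pow_nonneg h1t _)
  have hkey : (302875106592253/124825406275584 : ℝ) * t ^ 14 + t = (t + t ^ 2 / 2 + t ^ 3 / 3 + t ^ 4 / 4 + t ^ 5 / 5 + t ^ 6 / 6 + t ^ 7 / 7 + t ^ 8 / 8 + t ^ 9 / 9 + t ^ 10 / 10 + t ^ 11 / 11 + t ^ 12 / 12 + t ^ 13 / 13 + t ^ 14 / 14 + t ^ 15 / 15 + t ^ 16 / 16 + t ^ 17 / 17) - ((1/2:ℝ) * t ^ 2 * (1 - t) ^ 15 + (47/6:ℝ) * t ^ 3 * (1 - t) ^ 14 + (689/12:ℝ) * t ^ 4 * (1 - t) ^ 13 + (15677/60:ℝ) * t ^ 5 * (1 - t) ^ 12 + (8259/10:ℝ) * t ^ 6 * (1 - t) ^ 11 + (134529/70:ℝ) * t ^ 7 * (1 - t) ^ 10 + (190585/56:ℝ) * t ^ 8 * (1 - t) ^ 9 + (2355905/504:ℝ) * t ^ 9 * (1 - t) ^ 8 + (633343/126:ℝ) * t ^ 10 * (1 - t) ^ 7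 + (839263/198:ℝ) * t ^ 11 * (1 - t) ^ 6 + (1103527/396:ℝ) * t ^ 12 * (1 - t) ^ 5 + (7247363/5148:ℝ) * t ^ 13 * (1 - t) ^ 4 + (9456994994973075373/17850033097408512:ℝ) * t ^ 14 * (1 - t) ^ 3 + (4060881736586102369/29750055162347520:ℝ) * t ^ 15 * (1 - t) ^ 2 + (541249392229090913/29750055162347520:ℝ) * t ^ 16 * (1 - t) ^ 1 + (19971007491501169/1517252813279723520:ℝ) * t ^ 17 * (1 - t) ^ 0) := by ring
  rw [hsum, hkey]
  exact sub_le_self _ hc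

lemma poly15 (t : ℝ) (h0 : 0 ≤ t) (h1 : t < 1) :
    (11112006825558016/4543126598883795 : ℝ) * t ^ 15 + t ≤ ∑ i ∈ Finset.range 18, t ^ (i + 1) / (i + 1) := by
  have h1t : (0:ℝ) ≤ 1 - t := by linarith
  have hsum : ∑ i ∈ Finset.range 18, t ^ (i + 1) / ((i : ℝ) + 1) = t + t ^ 2 / 2 + t ^ 3 / 3 + t ^ 4 / 4 + t ^ 5 / 5 + t ^ 6 / 6 + t ^ 7 / 7 + t ^ 8 / 8 + t ^ 9 / 9 + t ^ 10 / 10 + t ^ 11 / 11 + t ^ 12 / 12 + t ^ 13 / 13 + t ^ 14 / 14 + t ^ 15 / 15 + t ^ 16 / 16 + t ^ 17 / 17 + t ^ 18 / 18 := by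
    norm_num [Finset.sum_range_succ]
  have hc : (0:ℝ) ≤ (1/2:ℝ) * t ^ 2 * (1 - t) ^ 16 + (25/3:ℝ) * t ^ 3 * (1 - t) ^ 15 + (261/4:ℝ) * t ^ 4 * (1 - t) ^ 14 + (3187/10:ℝ) * t ^ 5 * (1 - t) ^ 13 + (65231/60:ℝ) * t ^ 6 * (1 - t) ^ 12 + (96171/35:ℝ) * t ^ 7 * (1 - t) ^ 11 + (1491041/280:ℝ) * t ^ 8 * (1 - t) ^ 10 + (2035585/252:ℝ) * t ^ 9 * (1 - t) ^ 9 + (543253/56:ℝ) * t ^ 10 * (1 - t) ^ 8 + (713423/77:ℝ) * t ^ 11 * (1 - t) ^ 7 + (309117/44:ℝ) * t ^ 12 * (1 - t) ^ 6 + (1199623/286:ℝ) * t ^ 13 * (1 - t) ^ 5 + (7767883/4004:ℝ) * t ^ 14 * (1 - t) ^ 4 + (235626066864001395271/349820748114052215:ℝ) * t ^ 15 * (1 - t) ^ 3 + (302084401886333722191/1865710656608278480:ℝ) * t ^ 16 * (1 - t) ^ 2 + (326277783467540590991/15858540581170367080:ℝ) * t ^ 17 * (1 - t) ^ 1 + (1560921773468790399/31717081162340734160:ℝ)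 * t ^ 18 * (1 - t) ^ 0 := by
    repeat' apply add_nonneg
    all_goals apply mul_nonneg (mul_nonneg (by norm_num) (pow_nonneg h0 _)) (pow_nonneg h1t _)
  have hkey : (11112006825558016/4543126598883795 : ℝ) * t ^ 15 + t = (t + t ^ 2 / 2 + t ^ 3 / 3 + t ^ 4 / 4 + t ^ 5 / 5 + t ^ 6 / 6 + t ^ 7 / 7 + t ^ 8 / 8 + t ^ 9 / 9 + t ^ 10 / 10 + t ^ 11 / 11 + t ^ 12 / 12 + t ^ 13 / 13 + t ^ 14 / 14 + t ^ 15 / 15 + t ^ 16 / 16 + t ^ 17 / 17 + t ^ 18 / 18) - ((1/2:ℝ) * t ^ 2 * (1 - t) ^ 16 + (25/3:ℝ) * t ^ 3 * (1 - t) ^ 15 + (261/4:ℝ) * t ^ 4 * (1 - t) ^ 14 + (3187/10:ℝ) * t ^ 5 * (1 - t) ^ 13 + (65231/60:ℝ) * t ^ 6 * (1 - t) ^ 12 + (96171/35:ℝ) * t ^ 7 * (1 - t) ^ 11 + (1491041/280:ℝ) * t ^ 8 * (1 - t) ^ 10 + (2035585/252:ℝ) * t ^ 9 * (1 - t) ^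 9 + (543253/56:ℝ) * t ^ 10 * (1 - t) ^ 8 + (713423/77:ℝ) * t ^ 11 * (1 - t) ^ 7 + (309117/44:ℝ) * t ^ 12 * (1 - t) ^ 6 + (1199623/286:ℝ) * t ^ 13 * (1 - t) ^ 5 + (7767883/4004:ℝ) * t ^ 14 * (1 - t) ^ 4 + (235626066864001395271/349820748114052215:ℝ) * t ^ 15 * (1 - t) ^ 3 + (302084401886333722191/1865710656608278480:ℝ) * t ^ 16 * (1 - t) ^ 2 + (326277783467540590991/15858540581170367080:ℝ) * t ^ 17 * (1 - t) ^ 1 + (1560921773468790399/31717081162340734160:ℝ) * t ^ 18 * (1 - t) ^ 0) := by ring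
  rw [hsum, hkey]
  exact sub_le_self _ hc

lemma poly16 (t : ℝ) (h0 : 0 ≤ t) (h1 : t < 1) :
    (437893890380859375/177792109208928256 : ℝ) * t ^ 16 + t ≤ ∑ i ∈ Finset.range 18, t ^ (i + 1) / (i + 1) := by
  have h1t : (0:ℝ) ≤ 1 - t := by linarith
  have hsum : ∑ i ∈ Finset.range 18, t ^ (i + 1) / ((i : ℝ) + 1) = t + t ^ 2 / 2 + t ^ 3 / 3 + t ^ 4 / 4 + t ^ 5 / 5 + t ^ 6 / 6 + t ^ 7 / 7 + t ^ 8 / 8 + t ^ 9 / 9 + t ^ 10 / 10 + t ^ 11 / 11 + t ^ 12 / 12 + t ^ 13 / 13 + t ^ 14 / 14 + t ^ 15 / 15 + t ^ 16 / 16 + t ^ 17 / 17 + t ^ 18 / 18 := by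
    norm_num [Finset.sum_range_succ]
  have hc : (0:ℝ) ≤ (1/2:ℝ) * t ^ 2 * (1 - t) ^ 16 + (25/3:ℝ) * t ^ 3 * (1 - t) ^ 15 + (261/4:ℝ) * t ^ 4 * (1 - t) ^ 14 + (3187/10:ℝ) * t ^ 5 * (1 - t) ^ 13 + (65231/60:ℝ) * t ^ 6 * (1 - t) ^ 12 + (96171/35:ℝ) * t ^ 7 * (1 - t) ^ 11 + (1491041/280:ℝ) * t ^ 8 * (1 - t) ^ 10 + (2035585/252:ℝ) * t ^ 9 * (1 - t) ^ 9 + (543253/56:ℝ) * t ^ 10 * (1 - t) ^ 8 + (713423/77:ℝ) * t ^ 11 * (1 - t) ^ 7 + (309117/44:ℝ) * t ^ 12 * (1 - t) ^ 6 + (1199623/286:ℝ) * t ^ 13 * (1 - t) ^ 5 + (7767883/4004:ℝ) * t ^ 14 * (1 - t) ^ 4 + (3383421/5005:ℝ) * t ^ 15 * (1 - t) ^ 3 + (21202390977993847805819/127121358084383703040:ℝ) * t ^ 16 * (1 - t) ^ 2 + (24837137221774908362539/1080531543717261475840:ℝ) * t ^ 17 * (1 - t) ^ 1 + (208457188111195942273/6483189262303568855040:ℝ)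 * t ^ 18 * (1 - t) ^ 0 := by
    repeat' apply add_nonneg
    all_goals apply mul_nonneg (mul_nonneg (by norm_num) (pow_nonneg h0 _)) (pow_nonneg h1t _)
  have hkey : (437893890380859375/177792109208928256 : ℝ) * t ^ 16 + t = (t + t ^ 2 / 2 + t ^ 3 / 3 + t ^ 4 / 4 + t ^ 5 / 5 + t ^ 6 / 6 + t ^ 7 / 7 + t ^ 8 / 8 + t ^ 9 / 9 + t ^ 10 / 10 + t ^ 11 / 11 + t ^ 12 / 12 + t ^ 13 / 13 + t ^ 14 / 14 + t ^ 15 / 15 + t ^ 16 / 16 + t ^ 17 / 17 + t ^ 18 / 18) - ((1/2:ℝ) * t ^ 2 * (1 - t) ^ 16 + (25/3:ℝ) * t ^ 3 * (1 - t) ^ 15 + (261/4:ℝ) * t ^ 4 * (1 - t) ^ 14 + (3187/10:ℝ) * t ^ 5 * (1 - t) ^ 13 + (65231/60:ℝ) * t ^ 6 * (1 - t) ^ 12 + (96171/35:ℝ) * t ^ 7 * (1 - t) ^ 11 + (1491041/280:ℝ) * t ^ 8 * (1 - t) ^ 10 + (2035585/252:ℝ) * t ^ 9 * (1 - t) ^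 9 + (543253/56:ℝ) * t ^ 10 * (1 - t) ^ 8 + (713423/77:ℝ) * t ^ 11 * (1 - t) ^ 7 + (309117/44:ℝ) * t ^ 12 * (1 - t) ^ 6 + (1199623/286:ℝ) * t ^ 13 * (1 - t) ^ 5 + (7767883/4004:ℝ) * t ^ 14 * (1 - t) ^ 4 + (3383421/5005:ℝ) * t ^ 15 * (1 - t) ^ 3 + (21202390977993847805819/127121358084383703040:ℝ) * t ^ 16 * (1 - t) ^ 2 + (24837137221774908362539/1080531543717261475840:ℝ) * t ^ 17 * (1 - t) ^ 1 + (208457188111195942273/6483189262303568855040:ℝ) * t ^ 18 * (1 - t) ^ 0) := by ring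
  rw [hsum, hkey]
  exact sub_le_self _ hc

lemma poly17 (t : ℝ) (h0 : 0 ≤ t) (h1 : t < 1) :
    (18446744073709551616/7444196136474609375 : ℝ) * t ^ 17 + t ≤ ∑ i ∈ Finset.range 18, t ^ (i + 1) / (i + 1) := by
  have h1t : (0:ℝ) ≤ 1 - t := by linarith
  have hsum : ∑ i ∈ Finset.range 18, t ^ (i + 1) / ((i : ℝ) + 1) = t + t ^ 2 / 2 + t ^ 3 / 3 + t ^ 4 / 4 + t ^ 5 / 5 + t ^ 6 / 6 + t ^ 7 / 7 + t ^ 8 / 8 + t ^ 9 / 9 + t ^ 10 / 10 + t ^ 11 / 11 + t ^ 12 / 12 + t ^ 13 / 13 + t ^ 14 / 14 + t ^ 15 / 15 + t ^ 16 / 16 + t ^ 17 / 17 + t ^ 18 / 18 := by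
    norm_num [Finset.sum_range_succ]
  have hc : (0:ℝ) ≤ (1/2:ℝ) * t ^ 2 * (1 - t) ^ 16 + (25/3:ℝ) * t ^ 3 * (1 - t) ^ 15 + (261/4:ℝ) * t ^ 4 * (1 - t) ^ 14 + (3187/10:ℝ) * t ^ 5 * (1 - t) ^ 13 + (65231/60:ℝ) * t ^ 6 * (1 - t) ^ 12 + (96171/35:ℝ) * t ^ 7 * (1 - t) ^ 11 + (1491041/280:ℝ) * t ^ 8 * (1 - t) ^ 10 + (2035585/252:ℝ) * t ^ 9 * (1 - t) ^ 9 + (543253/56:ℝ) * t ^ 10 * (1 - t) ^ 8 + (713423/77:ℝ) * t ^ 11 * (1 - t) ^ 7 + (309117/44:ℝ) * t ^ 12 * (1 - t) ^ 6 + (1199623/286:ℝ) * t ^ 13 * (1 - t) ^ 5 + (7767883/4004:ℝ) * t ^ 14 * (1 - t) ^ 4 + (3383421/5005:ℝ) * t ^ 15 * (1 - t) ^ 3 + (13553663/80080:ℝ) * t ^ 16 * (1 - t) ^ 2 + (1516196698741065209487197/59613122660888671875000:ℝ) * t ^ 17 * (1 - t) ^ 1 + (2039314750849901396269/119226245321777343750000:ℝ)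 * t ^ 18 * (1 - t) ^ 0 := by
    repeat' apply add_nonneg
    all_goals apply mul_nonneg (mul_nonneg (by norm_num) (pow_nonneg h0 _)) (pow_nonneg h1t _)
  have hkey : (18446744073709551616/7444196136474609375 : ℝ) * t ^ 17 + t = (t + t ^ 2 / 2 + t ^ 3 / 3 + t ^ 4 / 4 + t ^ 5 / 5 + t ^ 6 / 6 + t ^ 7 / 7 + t ^ 8 / 8 + t ^ 9 / 9 + t ^ 10 / 10 + t ^ 11 / 11 + t ^ 12 / 12 + t ^ 13 / 13 + t ^ 14 / 14 + t ^ 15 / 15 + t ^ 16 / 16 + t ^ 17 / 17 + t ^ 18 / 18) - ((1/2:ℝ) * t ^ 2 * (1 - t) ^ 16 + (25/3:ℝ) * t ^ 3 * (1 - t) ^ 15 + (261/4:ℝ) * t ^ 4 * (1 - t) ^ 14 + (3187/10:ℝ) * t ^ 5 * (1 - t) ^ 13 + (65231/60:ℝ) * t ^ 6 * (1 - t) ^ 12 + (96171/35:ℝ) * t ^ 7 * (1 - t) ^ 11 + (1491041/280:ℝ) * t ^ 8 * (1 - t) ^ 10 + (2035585/252:ℝ) * t ^ 9 * (1 - t)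 ^ 9 + (543253/56:ℝ) * t ^ 10 * (1 - t) ^ 8 + (713423/77:ℝ) * t ^ 11 * (1 - t) ^ 7 + (309117/44:ℝ) * t ^ 12 * (1 - t) ^ 6 + (1199623/286:ℝ) * t ^ 13 * (1 - t) ^ 5 + (7767883/4004:ℝ) * t ^ 14 * (1 - t) ^ 4 + (3383421/5005:ℝ) * t ^ 15 * (1 - t) ^ 3 + (13553663/80080:ℝ) * t ^ 16 * (1 - t) ^ 2 + (1516196698741065209487197/59613122660888671875000:ℝ) * t ^ 17 * (1 - t) ^ 1 + (2039314750849901396269/119226245321777343750000:ℝ) * t ^ 18 * (1 - t) ^ 0) := by ring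
  rw [hsum, hkey]
  exact sub_le_self _ hc


/-- Talagrand's replica symmetry test at the shattering inverse temperature:
for `p ≥ 3` and `β_sh = sqrt((p-1)^(p-1) / (p (p-2)^(p-2)))`, the function
`f(t) = β_sh² t^p + log(1-t) + t` is nonpositive on `[0,1)`. -/
theorem stmt_0 (p : ℕ) (hp : 3 ≤ p)
    (βsh : ℝ)
    (hβsh : βsh = Real.sqrt (((p : ℝ) - 1) ^ (p - 1) / ((p : ℝ) * ((p : ℝ) - 2) ^ (p - 2))))
    (t : ℝ) (ht : t ∈ Set.Ico (0 : ℝ) 1) :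
    βsh ^ 2 * t ^ p + Real.log (1 - t) + t ≤ 0 := by
  obtain ⟨h0, h1⟩ := ht
  have hp2 : (2:ℝ) ≤ (p:ℝ) := by exact_mod_cast (by omega : 2 ≤ p)
  have hb2 : βsh ^ 2 = ((p : ℝ) - 1) ^ (p - 1) / ((p : ℝ) * ((p : ℝ) - 2) ^ (p - 2)) := by
    rw [hβsh]
    apply Real.sq_sqrt
    apply div_nonneg (pow_nonneg (by linarith) _)
    exact mul_nonneg (by linarith) (pow_nonneg (by linarith) _)
  rcases lt_or_ge p 23 with hs | hbig
  · interval_cases p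
    · rw [show βsh ^ 2 = (4/3 : ℝ) from by rw [hb2]; norm_num]
      exact finish0 t h0 h1 _ 3 6 (poly3 t h0 h1)
    · rw [show βsh ^ 2 = (27/16 : ℝ) from by rw [hb2]; norm_num]
      exact finish0 t h0 h1 _ 4 8 (poly4 t h0 h1)
    · rw [show βsh ^ 2 = (256/135 : ℝ) from by rw [hb2]; norm_num]
      exact finish0 t h0 h1 _ 5 10 (poly5 t h0 h1)
    · rw [show βsh ^ 2 = (3125/1536 : ℝ) from by rw [hb2]; norm_num]
      exact finish0 t h0 h1 _ 6 12 (poly6 t h0 h1)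
    · rw [show βsh ^ 2 = (46656/21875 : ℝ) from by rw [hb2]; norm_num]
      exact finish0 t h0 h1 _ 7 13 (poly7 t h0 h1)
    · rw [show βsh ^ 2 = (823543/373248 : ℝ) from by rw [hb2]; norm_num]
      exact finish0 t h0 h1 _ 8 14 (poly8 t h0 h1)
    · rw [show βsh ^ 2 = (16777216/7411887 : ℝ) from by rw [hb2]; norm_num]
      exact finish0 t h0 h1 _ 9 15 (poly9 t h0 h1)
    · rw [show βsh ^ 2 = (387420489/167772160 : ℝ) from by rw [hb2]; norm_num]
      exact finish0 t h0 h1 _ 10 15 (poly10 t h0 h1)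
    · rw [show βsh ^ 2 = (10000000000/4261625379 : ℝ) from by rw [hb2]; norm_num]
      exact finish0 t h0 h1 _ 11 16 (poly11 t h0 h1)
    · rw [show βsh ^ 2 = (285311670611/120000000000 : ℝ) from by rw [hb2]; norm_num]
      exact finish0 t h0 h1 _ 12 16 (poly12 t h0 h1)
    · rw [show βsh ^ 2 = (8916100448256/3709051717943 : ℝ) from by rw [hb2]; norm_num]
      exact finish0 t h0 h1 _ 13 17 (poly13 t h0 h1)
    · rw [show βsh ^ 2 = (302875106592253/124825406275584 : ℝ) from by rw [hb2]; norm_num]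
      exact finish0 t h0 h1 _ 14 17 (poly14 t h0 h1)
    · rw [show βsh ^ 2 = (11112006825558016/4543126598883795 : ℝ) from by rw [hb2]; norm_num]
      exact finish0 t h0 h1 _ 15 18 (poly15 t h0 h1)
    · rw [show βsh ^ 2 = (437893890380859375/177792109208928256 : ℝ) from by rw [hb2]; norm_num]
      exact finish0 t h0 h1 _ 16 18 (poly16 t h0 h1)
    · rw [show βsh ^ 2 = (18446744073709551616/7444196136474609375 : ℝ) from by rw [hb2]; norm_num]
      exact finish0 t h0 h1 _ 17 18 (poly17 t h0 h1)
    · rw [show βsh ^ 2 = (827240261886336764177/332041393326771929088 : ℝ) from by rw [hb2]; norm_num]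
      refine finish0 t h0 h1 _ 18 18 (coeffCase t h0 h1 _ 18 (by norm_num) (by norm_num) ?_)
      norm_num [Finset.sum_range_succ]
    · rw [show βsh ^ 2 = (39346408075296537575424/15717564975840398519363 : ℝ) from by rw [hb2]; norm_num]
      refine finish0 t h0 h1 _ 19 19 (coeffCase t h0 h1 _ 19 (by norm_num) (by norm_num) ?_)
      norm_num [Finset.sum_range_succ]
    · rw [show βsh ^ 2 = (1978419655660313589123979/786928161505930751508480 : ℝ) from by rw [hb2]; norm_num]
      refine finish0 t h0 h1 _ 20 20 (coeffCase t h0 h1 _ 20 (by norm_num) (by norm_num) ?_)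
      norm_num [Finset.sum_range_succ]
    · rw [show βsh ^ 2 = (104857600000000000000000000/41546812768866585371603559 : ℝ) from by rw [hb2]; norm_num]
      refine finish0 t h0 h1 _ 21 21 (coeffCase t h0 h1 _ 21 (by norm_num) (by norm_num) ?_)
      norm_num [Finset.sum_range_succ]
    · rw [show βsh ^ 2 = (5842587018385982521381124421/2306867200000000000000000000 : ℝ) from by rw [hb2]; norm_num]
      refine finish0 t h0 h1 _ 22 22 (coeffCase t h0 h1 _ 22 (by norm_num) (by norm_num) ?_)
      norm_num [Finset.sum_range_succ]
  · rw [hb2]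
    refine finish0 t h0 h1 _ p p (coeffCase t h0 h1 _ p (by omega) ?_ (bigBound p hbig))
    exact hb2 ▸ sq_nonneg βsh
end

section
/- Let p ≥ 3 be an integer, let q ∈ (0,1) satisfy q^2 ≥ (p-2)/p, and let β > 0 satisfy β * sqrt(p(p-1)) * (1-q^2) * q^(p-2) ≤ 1. Define ξ_q(t) = ((1-q^2)t + q^2)^p - q^(2p) - p(1-q^2) t q^(2p-2). Then β^2 ξ_q(t) + log(1-t) + t ≤ 0 for all t ∈ [0,1). -/
/-- Key coefficient bound: for `2 ≤ k ≤ p`,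
`k * C(p,k) * θ^k * a^(p-k) ≤ p(p-1) θ² a^(p-2)` when `(p-2)θ ≤ 2a`. -/
lemma coeff_bound_aux (p : ℕ) (hp : 3 ≤ p) (a θ : ℝ) (ha : 0 ≤ a) (hθ : 0 ≤ θ)
    (hpa : ((p : ℝ) - 2) * θ ≤ 2 * a) :
    ∀ k, 2 ≤ k → k ≤ p →
      (k : ℝ) * (p.choose k) * θ ^ k * a ^ (p - k) ≤
        (p : ℝ) * ((p : ℝ) - 1) * θ ^ 2 * a ^ (p - 2) := by
  intro k hk
  induction k, hk using Nat.le_induction with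
  | base =>
    intro _
    rw [Nat.cast_choose_two]
    ring_nf
    exact le_refl _
  | succ n hn IH =>
    intro hnp1
    have hnp : n ≤ p := by omega
    have IH' := IH hnp
    have hcast : ((n : ℝ) + 1) * (p.choose (n + 1)) = (p.choose n) * ((p : ℝ) - n) := by
      have h := Nat.choose_succ_right_eq p n
      have h2 := congrArg (Nat.cast (R := ℝ)) h
      push_cast [Nat.cast_sub hnp] at h2
      linarith [h2]
    have hsub : p - n = (p - (n + 1)) + 1 := by omega
    have h1 : ((p : ℝ) - n) * θ ≤ (n : ℝ) * a := by
      have hn2 : (2 : ℝ) ≤ n := by exact_mod_cast hn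
      have hnp' : (n : ℝ) ≤ p := by exact_mod_cast hnp
      nlinarith [mul_le_mul_of_nonneg_left hpa (show (0:ℝ) ≤ n by linarith)]
    have hc : (0 : ℝ) ≤ (p.choose n : ℝ) * θ ^ n * a ^ (p - (n + 1)) := by positivity
    push_cast
    calc ((n : ℝ) + 1) * (p.choose (n + 1)) * θ ^ (n + 1) * a ^ (p - (n + 1))
        = ((p.choose n : ℝ) * θ ^ n * a ^ (p - (n + 1))) * (((p : ℝ) - n) * θ) := by
          rw [hcast, pow_succ]; ring
      _ ≤ ((p.choose n : ℝ) * θ ^ n * a ^ (p - (n + 1))) * ((n : ℝ) * a) :=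
          mul_le_mul_of_nonneg_left h1 hc
      _ = (n : ℝ) * (p.choose n) * θ ^ n * a ^ (p - n) := by
          rw [hsub, pow_succ]; ring
      _ ≤ (p : ℝ) * ((p : ℝ) - 1) * θ ^ 2 * a ^ (p - 2) := IH'

/-- Talagrand's replica symmetry test for the co-dimension 1 model `ξ_q` at latitude `q`:
if `q² ≥ (p-2)/p` and `β sqrt(p(p-1)) (1-q²) q^(p-2) ≤ 1`, then
`β² ξ_q(t) + log(1-t) + t ≤ 0` on `[0,1)`. -/
theorem stmt_3 (p : ℕ) (hp : 3 ≤ p) (q : ℝ) (hq : q ∈ Set.Ioo (0 : ℝ) 1)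
    (hq2 : ((p : ℝ) - 2) / p ≤ q ^ 2) (β : ℝ) (hβ : 0 < β)
    (hfp : β * Real.sqrt ((p : ℝ) * ((p : ℝ) - 1)) * (1 - q ^ 2) * q ^ (p - 2) ≤ 1)
    (t : ℝ) (ht : t ∈ Set.Ico (0 : ℝ) 1) :
    β ^ 2 * (((1 - q ^ 2) * t + q ^ 2) ^ p - q ^ (2 * p) -
        (p : ℝ) * (1 - q ^ 2) * t * q ^ (2 * p - 2)) +
      Real.log (1 - t) + t ≤ 0 := by
  obtain ⟨hq0, hq1⟩ := hq
  obtain ⟨ht0, ht1⟩ := ht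
  have hpR : (3 : ℝ) ≤ p := by exact_mod_cast hp
  have hθ0 : (0 : ℝ) ≤ 1 - q ^ 2 := by nlinarith
  have ha0 : (0 : ℝ) ≤ q ^ 2 := by positivity
  have hs0 : (0 : ℝ) ≤ (p : ℝ) * ((p : ℝ) - 1) := by nlinarith
  -- fixed point condition squared
  have hqq : ((q ^ 2) ^ (p - 2) : ℝ) = q ^ (p - 2) * q ^ (p - 2) := by
    rw [← pow_add, ← pow_mul]; congr 1; omega
  have hL0 : (0 : ℝ) ≤ β * Real.sqrt ((p : ℝ) * ((p : ℝ) - 1)) * (1 - q ^ 2) * q ^ (p - 2) := by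
    have := Real.sqrt_nonneg ((p : ℝ) * ((p : ℝ) - 1))
    positivity
  have hkey : β ^ 2 * ((p : ℝ) * ((p : ℝ) - 1) * (1 - q ^ 2) ^ 2 * (q ^ 2) ^ (p - 2)) ≤ 1 := by
    have hsq := Real.mul_self_sqrt hs0
    have hmul := mul_le_mul hfp hfp hL0 zero_le_one
    calc β ^ 2 * ((p : ℝ) * ((p : ℝ) - 1) * (1 - q ^ 2) ^ 2 * (q ^ 2) ^ (p - 2))
        = β ^ 2 * ((Real.sqrt ((p : ℝ) * ((p : ℝ) - 1)) * Real.sqrt ((p : ℝ) * ((p : ℝ) - 1)))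
            * (1 - q ^ 2) ^ 2 * (q ^ (p - 2) * q ^ (p - 2))) := by rw [hsq, hqq]
      _ = (β * Real.sqrt ((p : ℝ) * ((p : ℝ) - 1)) * (1 - q ^ 2) * q ^ (p - 2)) *
          (β * Real.sqrt ((p : ℝ) * ((p : ℝ) - 1)) * (1 - q ^ 2) * q ^ (p - 2)) := by ring
      _ ≤ 1 * 1 := hmul
      _ = 1 := one_mul 1
  -- latitude condition
  have hpa : ((p : ℝ) - 2) * (1 - q ^ 2) ≤ 2 * q ^ 2 := by
    have hp0 : (0 : ℝ) < p := by linarith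
    rw [div_le_iff₀ hp0] at hq2
    nlinarith
  -- rewrite powers of q
  have hq2p : q ^ (2 * p) = (q ^ 2) ^ p := by rw [pow_mul]
  have hq2p2 : q ^ (2 * p - 2) = (q ^ 2) ^ (p - 1) := by
    rw [show 2 * p - 2 = 2 * (p - 1) by omega, pow_mul]
  -- binomial expansion
  set f : ℕ → ℝ := fun k => (1 - q ^ 2) ^ k * t ^ k * (q ^ 2) ^ (p - k) * (p.choose k) with hf
  have hexp : ((1 - q ^ 2) * t + q ^ 2) ^ p = ∑ k ∈ Finset.range (p + 1), f k := by
    rw [add_pow]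
    exact Finset.sum_congr rfl fun k _ => by rw [mul_pow]
  have hsplit : ∑ k ∈ Finset.range (p + 1), f k =
      (q ^ 2) ^ p + (p : ℝ) * (1 - q ^ 2) * t * (q ^ 2) ^ (p - 1) +
        ∑ k ∈ Finset.Ico 2 (p + 1), f k := by
    rw [Finset.range_eq_Ico, Finset.sum_eq_sum_Ico_succ_bot (by omega),
      Finset.sum_eq_sum_Ico_succ_bot (by omega)]
    simp only [hf, Nat.zero_add, Nat.reduceAdd, pow_zero, one_mul, Nat.sub_zero, Nat.choose_zero_right,
      Nat.choose_one_right, Nat.cast_one, pow_one]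
    ring
  -- termwise coefficient bound
  have hsum1 : β ^ 2 * ∑ k ∈ Finset.Ico 2 (p + 1), f k ≤
      ∑ k ∈ Finset.Ico 2 (p + 1), t ^ k / k := by
    rw [Finset.mul_sum]
    apply Finset.sum_le_sum
    intro k hk
    rw [Finset.mem_Ico] at hk
    obtain ⟨hk2, hkp⟩ := hk
    have hkp' : k ≤ p := by omega
    have hc := coeff_bound_aux p hp (q ^ 2) (1 - q ^ 2) ha0 hθ0 hpa k hk2 hkp'
    have hkR : (0 : ℝ) < k := by exact_mod_cast (by omega : 0 < k)
    rw [le_div_iff₀ hkR]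
    have hb : β ^ 2 * ((k : ℝ) * (p.choose k) * (1 - q ^ 2) ^ k * (q ^ 2) ^ (p - k)) ≤ 1 := by
      calc β ^ 2 * ((k : ℝ) * (p.choose k) * (1 - q ^ 2) ^ k * (q ^ 2) ^ (p - k))
          ≤ β ^ 2 * ((p : ℝ) * ((p : ℝ) - 1) * (1 - q ^ 2) ^ 2 * (q ^ 2) ^ (p - 2)) :=
            mul_le_mul_of_nonneg_left hc (sq_nonneg β)
        _ ≤ 1 := hkey
    have htk : (0 : ℝ) ≤ t ^ k := by positivity
    have := mul_le_mul_of_nonneg_right hb htk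
    calc β ^ 2 * f k * k
        = β ^ 2 * ((k : ℝ) * (p.choose k) * (1 - q ^ 2) ^ k * (q ^ 2) ^ (p - k)) * t ^ k := by
          simp only [hf]; ring
      _ ≤ 1 * t ^ k := this
      _ = t ^ k := one_mul _
  -- log series bound
  have hsum2 : ∑ k ∈ Finset.Ico 2 (p + 1), t ^ k / k ≤ -Real.log (1 - t) - t := by
    have hlt : |t| < 1 := abs_lt.2 ⟨by linarith, ht1⟩
    have hs := Real.hasSum_pow_div_log_of_abs_lt_one hlt
    have h3 : ∑ n ∈ Finset.range p, t ^ (n + 1) / ((n : ℝ) + 1) ≤ -Real.log (1 - t) :=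
      sum_le_hasSum (Finset.range p) (fun i _ => by positivity) hs
    have h4 : ∑ k ∈ Finset.Ico 1 (p + 1), t ^ k / (k : ℝ) =
        ∑ n ∈ Finset.range p, t ^ (n + 1) / ((n : ℝ) + 1) := by
      rw [Finset.sum_Ico_eq_sum_range]
      simp only [Nat.add_sub_cancel]
      apply Finset.sum_congr rfl
      intro i _
      rw [add_comm 1 i]
      push_cast
      ring_nf
    have h5 : ∑ k ∈ Finset.Ico 1 (p + 1), t ^ k / (k : ℝ) =
        t + ∑ k ∈ Finset.Ico 2 (p + 1), t ^ k / (k : ℝ) := by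
      rw [Finset.sum_eq_sum_Ico_succ_bot (by omega)]
      norm_num
    linarith [h4 ▸ h3, h5]
  -- combine
  rw [hq2p, hq2p2, hexp, hsplit]
  have : β ^ 2 * ((q ^ 2) ^ p + (p : ℝ) * (1 - q ^ 2) * t * (q ^ 2) ^ (p - 1) +
      ∑ k ∈ Finset.Ico 2 (p + 1), f k - (q ^ 2) ^ p -
      (p : ℝ) * (1 - q ^ 2) * t * (q ^ 2) ^ (p - 1)) =
      β ^ 2 * ∑ k ∈ Finset.Ico 2 (p + 1), f k := by ring
  rw [this]
  linarith
end

section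
/- Let p ≥ 3 be an integer and let q ∈ (0,1) satisfy q^2 ≥ (p-2)/p. Then for every t ∈ [0,1], ((1-q^2) t + q^2)^(p-2) * (1-t)^2 ≤ q^(2(p-2)). -/
/-- For `p ≥ 3`, `q ∈ (0,1)` with `q² ≥ (p-2)/p`, and `t ∈ [0,1]`:
`((1-q²)t + q²)^(p-2) (1-t)² ≤ q^(2(p-2))`. -/
theorem stmt_4 (p : ℕ) (hp : 3 ≤ p) (q : ℝ) (hq : q ∈ Set.Ioo (0 : ℝ) 1)
    (hq2 : ((p : ℝ) - 2) / p ≤ q ^ 2) (t : ℝ) (ht : t ∈ Set.Icc (0 : ℝ) 1) :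
    ((1 - q ^ 2) * t + q ^ 2) ^ (p - 2) * (1 - t) ^ 2 ≤ q ^ (2 * (p - 2)) := by
  obtain ⟨hq0, hq1⟩ := hq
  obtain ⟨ht0, ht1⟩ := ht
  set n := p - 2 with hn
  have hn1 : 1 ≤ n := by omega
  have hnpos : (0:ℝ) < n := by exact_mod_cast Nat.pos_of_ne_zero (by omega)
  have ha0 : (0:ℝ) < q ^ 2 := by positivity
  have ha1 : q ^ 2 < 1 := by nlinarith
  have hpn : (p:ℝ) = (n : ℝ) + 2 := by
    have : p = n + 2 := by omega
    rw [this]; push_cast; ring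
  have hppos : (0:ℝ) < p := by positivity
  -- key inequality: (1 - q^2) * n ≤ 2 * q^2
  have key' : (1 - q ^ 2) * n ≤ 2 * q ^ 2 := by
    rw [div_le_iff₀ hppos] at hq2
    nlinarith [hq2]
  have h1 : (1 - q ^ 2) * t + q ^ 2 ≤ q ^ 2 * (1 + 2 * t / n) := by
    have hdiv : (1 - q ^ 2) * t ≤ q ^ 2 * (2 * t / n) := by
      rw [mul_div_assoc', le_div_iff₀ hnpos]
      nlinarith [mul_le_mul_of_nonneg_left key' ht0]
    have hexp : q ^ 2 * (1 + 2 * t / n) = q ^ 2 + q ^ 2 * (2 * t / n) := by ring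
    linarith
  have hbase0 : 0 ≤ (1 - q ^ 2) * t + q ^ 2 := by nlinarith
  have h2 : ((1 - q ^ 2) * t + q ^ 2) ^ n ≤ (q ^ 2 * (1 + 2 * t / n)) ^ n :=
    pow_le_pow_left₀ hbase0 h1 n
  have h3 : (1 + 2 * t / n) ≤ Real.exp (2 * t / n) := by
    have := Real.add_one_le_exp (2 * t / n); linarith
  have h4 : (1 + 2 * t / n) ^ n ≤ Real.exp (2 * t / n) ^ n :=
    pow_le_pow_left₀ (by positivity) h3 n
  have h5 : Real.exp (2 * t / n) ^ n = Real.exp (2 * t) := by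
    rw [← Real.exp_nat_mul]
    congr 1
    field_simp
  have h6 : Real.exp t * (1 - t) ≤ 1 := by
    have h := Real.add_one_le_exp (-t)
    have h' : (1 - t) ≤ Real.exp (-t) := by linarith
    have := mul_le_mul_of_nonneg_left h' (Real.exp_pos t).le
    rwa [← Real.exp_add, add_neg_cancel, Real.exp_zero] at this
  have h60 : 0 ≤ Real.exp t * (1 - t) :=
    mul_nonneg (Real.exp_pos t).le (by linarith)
  have h7 : Real.exp (2 * t) * (1 - t) ^ 2 ≤ 1 := by
    have he : Real.exp (2 * t) = Real.exp t * Real.exp t := by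
      rw [← Real.exp_add]; ring_nf
    rw [he]
    nlinarith [h6, h60]
  have hfin : ((1 - q ^ 2) * t + q ^ 2) ^ n * (1 - t) ^ 2 ≤ (q ^ 2) ^ n := by
    calc ((1 - q ^ 2) * t + q ^ 2) ^ n * (1 - t) ^ 2
        ≤ (q ^ 2 * (1 + 2 * t / n)) ^ n * (1 - t) ^ 2 :=
          mul_le_mul_of_nonneg_right h2 (sq_nonneg _)
      _ = (q ^ 2) ^ n * ((1 + 2 * t / n) ^ n * (1 - t) ^ 2) := by rw [mul_pow]; ring
      _ ≤ (q ^ 2) ^ n * (Real.exp (2 * t) * (1 - t) ^ 2) := by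
          refine mul_le_mul_of_nonneg_left ?_ (by positivity)
          exact mul_le_mul_of_nonneg_right (h5 ▸ h4) (sq_nonneg _)
      _ ≤ (q ^ 2) ^ n * 1 := mul_le_mul_of_nonneg_left h7 (by positivity)
      _ = (q ^ 2) ^ n := mul_one _
  rw [pow_mul]
  exact hfin
end

section
/- Let p ≥ 3 be an integer, E_∞ = -2 sqrt((p-1)/p), and define Θ(E) = (1/2) log(p-1) - ((p-2)/(4(p-1))) E^2 - (2/E_∞^2) ∫_E^{E_∞} sqrt(z^2 - E_∞^2) dz for E ≤ E_∞. Then Θ(E_∞) = (1/2) log(p-1) - (p-2)/p > 0, and there exists a unique E_0 ∈ (-∞, E_∞) with Θ(E_0) = 0; moreover Θ(E) < 0 for E < E_0 and Θ(E) > 0 for E_0 < E ≤ E_∞. -/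
/-- Numeric helper: `exp 1 ^ m < x ^ n` implies `m / n < log x`. -/
lemma stmt_9_log_aux (m n : ℕ) (x : ℝ) (hn : 0 < n) (hx : 0 < x)
    (h : Real.exp 1 ^ m < x ^ n) : (m : ℝ) / n < Real.log x := by
  rw [Real.lt_log_iff_exp_lt hx]
  refine lt_of_pow_lt_pow_left₀ n hx.le ?_
  rw [← Real.exp_nat_mul]
  have hn' : (n : ℝ) ≠ 0 := Nat.cast_ne_zero.mpr hn.ne'
  have h1 : (n : ℝ) * ((m : ℝ) / n) = (m : ℝ) := by field_simp
  rw [h1]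
  calc Real.exp (m : ℝ) = Real.exp 1 ^ m := by rw [← Real.exp_nat_mul, mul_one]
    _ < x ^ n := h

set_option maxHeartbeats 1000000 in
/-- For the asymptotic complexity `Θ`, one has `Θ(E∞) = ½ log(p-1) - (p-2)/p > 0`, there is a
unique `E₀ < E∞` with `Θ(E₀) = 0`, and `Θ < 0` below `E₀` while `Θ > 0` on `(E₀, E∞]`. -/
theorem stmt_9 (p : ℕ) (hp : 3 ≤ p)
    (Einf : ℝ) (hEinf : Einf = -2 * Real.sqrt (((p : ℝ) - 1) / p))
    (Θ : ℝ → ℝ)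
    (hΘ : Θ = fun E : ℝ =>
      (1 / 2) * Real.log ((p : ℝ) - 1) - (((p : ℝ) - 2) / (4 * ((p : ℝ) - 1))) * E ^ 2 -
        (2 / Einf ^ 2) * ∫ z in E..Einf, Real.sqrt (z ^ 2 - Einf ^ 2)) :
    Θ Einf = (1 / 2) * Real.log ((p : ℝ) - 1) - ((p : ℝ) - 2) / p ∧
    0 < Θ Einf ∧
    (∃! E₀ : ℝ, E₀ < Einf ∧ Θ E₀ = 0) ∧
    (∀ E₀ : ℝ, E₀ < Einf → Θ E₀ = 0 →
      (∀ E : ℝ, E < E₀ → Θ E < 0) ∧ (∀ E : ℝ, E₀ < E → E ≤ Einf → 0 < Θ E)) := by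
  have hp3 : (3 : ℝ) ≤ (p : ℝ) := by exact_mod_cast hp
  have hp1 : (0 : ℝ) < (p : ℝ) - 1 := by linarith
  have hp0 : (0 : ℝ) < (p : ℝ) := by linarith
  have hq : (0 : ℝ) < ((p : ℝ) - 1) / p := div_pos hp1 hp0
  have hsqrt : 0 < Real.sqrt (((p : ℝ) - 1) / p) := Real.sqrt_pos.mpr hq
  have hEneg : Einf < 0 := by rw [hEinf]; nlinarith
  have hE2 : Einf ^ 2 = 4 * (((p : ℝ) - 1) / p) := by
    rw [hEinf, neg_mul, neg_pow, mul_pow, Real.sq_sqrt hq.le]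
    ring
  set c : ℝ := (1 / 2) * Real.log ((p : ℝ) - 1) with hc_def
  set a : ℝ := ((p : ℝ) - 2) / (4 * ((p : ℝ) - 1)) with ha_def
  set k : ℝ := 2 / Einf ^ 2 with hk_def
  have ha : 0 < a := div_pos (by linarith) (by linarith)
  have hk : 0 < k := div_pos (by norm_num) (pow_two_pos_of_ne_zero hEneg.ne)
  set f : ℝ → ℝ := fun z => Real.sqrt (z ^ 2 - Einf ^ 2) with hf_def
  have hfc : Continuous f := Real.continuous_sqrt.comp ((continuous_pow 2).sub continuous_const)
  have hfi : ∀ A B : ℝ, IntervalIntegrable f MeasureTheory.volume A B := fun A B =>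
    hfc.intervalIntegrable A B
  have hfnn : ∀ z, 0 ≤ f z := fun z => Real.sqrt_nonneg _
  have hΘ' : ∀ E, Θ E = c - a * E ^ 2 - k * ∫ z in E..Einf, f z := fun E => by rw [hΘ]
  -- value at Einf
  have haE : a * Einf ^ 2 = ((p : ℝ) - 2) / p := by
    rw [hE2, ha_def]
    field_simp
  have hval : Θ Einf = c - ((p : ℝ) - 2) / p := by
    rw [hΘ' Einf, intervalIntegral.integral_same, mul_zero, sub_zero, haE]
  -- positivity of Θ Einf
  have hlog : 2 * (((p : ℝ) - 2) / p) < Real.log ((p : ℝ) - 1) := by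
    have hratio : 2 * (((p : ℝ) - 2) / p) = (2 * ((p:ℝ) - 2)) / p := by ring
    have he : Real.exp 1 < 2.72 := lt_trans Real.exp_one_lt_d9 (by norm_num)
    have he0 : (0:ℝ) < Real.exp 1 := Real.exp_pos 1
    rcases le_or_gt 9 p with h9 | h9
    · have h9' : (9 : ℝ) ≤ (p : ℝ) := by exact_mod_cast h9
      have h8 : Real.log 8 ≤ Real.log ((p : ℝ) - 1) := by
        apply Real.log_le_log (by norm_num)
        linarith
      have hl2 : (0.6931471803 : ℝ) < Real.log 2 := Real.log_two_gt_d9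
      have hl8 : Real.log 8 = 3 * Real.log 2 := by
        rw [show (8:ℝ) = 2 ^ (3:ℕ) by norm_num, Real.log_pow]
        norm_num
      have h1 : 2 * (((p : ℝ) - 2) / p) < 2 := by
        rw [hratio, div_lt_iff₀ hp0]; linarith
      linarith
    · interval_cases p
      · -- p = 3 : log 2 > 2/3
        have hpow : Real.exp 1 ^ 2 < (2.72:ℝ) ^ 2 := pow_lt_pow_left₀ he he0.le (by norm_num)
        have := stmt_9_log_aux 2 3 2 (by norm_num) (by norm_num)
          (lt_trans hpow (by norm_num))
        norm_num at this ⊢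
        linarith
      · -- p = 4 : log 3 > 1
        have hpow : Real.exp 1 ^ 1 < (2.72:ℝ) ^ 1 := pow_lt_pow_left₀ he he0.le (by norm_num)
        have := stmt_9_log_aux 1 1 3 (by norm_num) (by norm_num)
          (lt_trans hpow (by norm_num))
        norm_num at this ⊢
        linarith
      · -- p = 5 : log 4 > 6/5
        have hpow : Real.exp 1 ^ 6 < (2.72:ℝ) ^ 6 := pow_lt_pow_left₀ he he0.le (by norm_num)
        have := stmt_9_log_aux 6 5 4 (by norm_num) (by norm_num)
          (lt_trans hpow (by norm_num))
        norm_num at this ⊢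
        linarith
      · -- p = 6 : log 5 > 4/3
        have hpow : Real.exp 1 ^ 4 < (2.72:ℝ) ^ 4 := pow_lt_pow_left₀ he he0.le (by norm_num)
        have := stmt_9_log_aux 4 3 5 (by norm_num) (by norm_num)
          (lt_trans hpow (by norm_num))
        norm_num at this ⊢
        linarith
      · -- p = 7 : log 6 > 10/7
        have hpow : Real.exp 1 ^ 10 < (2.72:ℝ) ^ 10 := pow_lt_pow_left₀ he he0.le (by norm_num)
        have := stmt_9_log_aux 10 7 6 (by norm_num) (by norm_num)
          (lt_trans hpow (by norm_num))
        norm_num at this ⊢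
        linarith
      · -- p = 8 : log 7 > 3/2
        have hpow : Real.exp 1 ^ 3 < (2.72:ℝ) ^ 3 := pow_lt_pow_left₀ he he0.le (by norm_num)
        have := stmt_9_log_aux 3 2 7 (by norm_num) (by norm_num)
          (lt_trans hpow (by norm_num))
        norm_num at this ⊢
        linarith
  have hpos : 0 < Θ Einf := by
    rw [hval, hc_def]; linarith
  -- strict monotonicity on Iic Einf
  have hmono : StrictMonoOn Θ (Set.Iic Einf) := by
    intro E1 h1 E2 h2 h12
    simp only [Set.mem_Iic] at h1 h2
    have hsplit : (∫ z in E1..E2, f z) + (∫ z in E2..Einf, f z) = ∫ z in E1..Einf, f z :=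
      intervalIntegral.integral_add_adjacent_intervals (hfi _ _) (hfi _ _)
    have hI : 0 ≤ ∫ z in E1..E2, f z :=
      intervalIntegral.integral_nonneg h12.le (fun x _ => hfnn x)
    have hsq : E2 ^ 2 < E1 ^ 2 := by nlinarith
    rw [hΘ' E1, hΘ' E2, ← hsplit]
    have h3 : 0 < a * (E1 ^ 2 - E2 ^ 2) := mul_pos ha (by linarith)
    have h4 : 0 ≤ k * (∫ z in E1..E2, f z) := mul_nonneg hk.le hI
    nlinarith
  -- continuity of Θ
  have hg : Continuous fun E => ∫ z in Einf..E, f z :=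
    intervalIntegral.continuous_primitive (fun A B => hfi A B) Einf
  have hcont : Continuous Θ := by
    have hform : Θ = fun E => c - a * E ^ 2 - k * -(∫ z in Einf..E, f z) := by
      funext E
      rw [hΘ' E, intervalIntegral.integral_symm]
    rw [hform]
    exact (continuous_const.sub (continuous_const.mul (continuous_pow 2))).sub
      (continuous_const.mul hg.neg)
  -- a point where Θ is negative
  have hc0 : 0 ≤ c := by
    rw [hc_def]
    have : 0 ≤ Real.log ((p : ℝ) - 1) := Real.log_nonneg (by linarith)
    linarith
  set M : ℝ := Real.sqrt (c / a) with hM_def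
  have hM : 0 ≤ M := Real.sqrt_nonneg _
  have hMsq : M ^ 2 = c / a := Real.sq_sqrt (div_nonneg hc0 ha.le)
  set E1 : ℝ := min (Einf - 1) (-(M + 1)) with hE1_def
  have hE1lt : E1 < Einf := lt_of_le_of_lt (min_le_left _ _) (by linarith)
  have hE1le : E1 ≤ -(M + 1) := min_le_right _ _
  have haM : a * M ^ 2 = c := by rw [hMsq]; field_simp
  have hcE1 : c < a * E1 ^ 2 := by
    have h1 : (M + 1) ^ 2 ≤ E1 ^ 2 := by nlinarith [sq_nonneg (E1 + (M + 1))]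
    have h2 : a * (M + 1) ^ 2 ≤ a * E1 ^ 2 := mul_le_mul_of_nonneg_left h1 ha.le
    nlinarith [mul_pos ha (show (0:ℝ) < 2 * M + 1 by linarith)]
  have hneg : Θ E1 < 0 := by
    rw [hΘ' E1]
    have hI : 0 ≤ ∫ z in E1..Einf, f z :=
      intervalIntegral.integral_nonneg hE1lt.le (fun x _ => hfnn x)
    nlinarith [mul_nonneg hk.le hI]
  -- existence of a zero via IVT
  obtain ⟨E0, hE0mem, hE0⟩ :=
    intermediate_value_Icc hE1lt.le hcont.continuousOn ⟨hneg.le, hpos.le⟩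
  have hE0lt : E0 < Einf :=
    lt_of_le_of_ne hE0mem.2 (fun h => by rw [h] at hE0; rw [hE0] at hpos; exact lt_irrefl 0 hpos)
  refine ⟨hval, hpos, ⟨E0, ⟨hE0lt, hE0⟩, ?_⟩, ?_⟩
  · rintro y ⟨hy1, hy2⟩
    exact hmono.injOn (Set.mem_Iic.mpr hy1.le) (Set.mem_Iic.mpr hE0lt.le) (by rw [hy2, hE0])
  · rintro E₀ hE₀lt hE₀
    constructor
    · intro E hE
      have := hmono (Set.mem_Iic.mpr (by linarith : E ≤ Einf)) (Set.mem_Iic.mpr hE₀lt.le) hE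
      linarith
    · intro E hE hEle
      have := hmono (Set.mem_Iic.mpr hE₀lt.le) (Set.mem_Iic.mpr hEle) hE
      linarith
end

section
/- Let p ≥ 3 be an integer, E_∞ = -2 sqrt((p-1)/p), β > 0, E ≤ E_∞, and define F_RS(E,q,β) = -β q^p E + (1/2) log(1-q^2) + (β^2/2)(1 - q^(2p) - p q^(2p-2)(1-q^2)) for q ∈ [0,1). Then for every q ∈ [0,1), ∂_q F_RS(E,q,β) = -(β^2 p (p-1) q / (1-q^2)) * ((1-q^2) q^(p-2) - A_-) * ((1-q^2) q^(p-2) - A_+), where A_± = (-E ± sqrt(E^2 - E_∞^2)) / (2 β (p-1)). -/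
set_option maxHeartbeats 1000000


/-- Factorized form of the `q`-derivative of the replica symmetric TAP free energy
`F_RS(E,q,β) = -β q^p E + ½ log(1-q²) + (β²/2)(1 - q^(2p) - p q^(2p-2)(1-q²))`:
`∂_q F_RS = -(β² p (p-1) q/(1-q²)) ((1-q²)q^(p-2) - A₋)((1-q²)q^(p-2) - A₊)` with
`A_± = (-E ± sqrt(E² - E∞²))/(2β(p-1))`. -/
theorem stmt_10 (p : ℕ) (hp : 3 ≤ p) (β : ℝ) (hβ : 0 < β)
    (Einf : ℝ) (hEinf : Einf = -2 * Real.sqrt (((p : ℝ) - 1) / p))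
    (E : ℝ) (hE : E ≤ Einf)
    (Aminus Aplus : ℝ)
    (hAm : Aminus = (-E - Real.sqrt (E ^ 2 - Einf ^ 2)) / (2 * β * ((p : ℝ) - 1)))
    (hAp : Aplus = (-E + Real.sqrt (E ^ 2 - Einf ^ 2)) / (2 * β * ((p : ℝ) - 1)))
    (q : ℝ) (hq : q ∈ Set.Ico (0 : ℝ) 1) :
    HasDerivAt (fun q : ℝ => -β * q ^ p * E + (1 / 2) * Real.log (1 - q ^ 2) +
        β ^ 2 / 2 * (1 - q ^ (2 * p) - (p : ℝ) * q ^ (2 * p - 2) * (1 - q ^ 2)))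
      (-(β ^ 2 * (p : ℝ) * ((p : ℝ) - 1) * q / (1 - q ^ 2)) *
        ((1 - q ^ 2) * q ^ (p - 2) - Aminus) * ((1 - q ^ 2) * q ^ (p - 2) - Aplus)) q := by
  obtain ⟨hq0, hq1⟩ := hq
  obtain ⟨k, hk⟩ : ∃ k, p = k + 3 := ⟨p - 3, by omega⟩
  subst hk
  have hp3 : (3:ℝ) ≤ ((k + 3 : ℕ) : ℝ) := by push_cast; linarith [Nat.cast_nonneg (α := ℝ) k]
  have hpR : (0:ℝ) < ((k + 3 : ℕ) : ℝ) := by linarith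
  have hp1 : (0:ℝ) < ((k + 3 : ℕ) : ℝ) - 1 := by linarith
  have hq2 : q ^ 2 < 1 := by nlinarith
  have hne : 1 - q ^ 2 ≠ 0 := by nlinarith
  -- square root facts
  have hx : (0:ℝ) ≤ (((k + 3 : ℕ) : ℝ) - 1) / ((k + 3 : ℕ) : ℝ) := by positivity
  have hEinf2 : Einf ^ 2 = 4 * ((((k + 3 : ℕ) : ℝ) - 1) / ((k + 3 : ℕ) : ℝ)) := by
    rw [hEinf, mul_pow, Real.sq_sqrt hx]; norm_num
  have hEinfle : Einf ≤ 0 := by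
    rw [hEinf]
    nlinarith [Real.sqrt_nonneg ((((k + 3 : ℕ) : ℝ) - 1) / ((k + 3 : ℕ) : ℝ))]
  have hs0 : 0 ≤ E ^ 2 - Einf ^ 2 := by nlinarith
  have hs : Real.sqrt (E ^ 2 - Einf ^ 2) ^ 2 = E ^ 2 - Einf ^ 2 := Real.sq_sqrt hs0
  have hd1 : (2 * β * (((k + 3 : ℕ) : ℝ) - 1)) ≠ 0 :=
    ne_of_gt (mul_pos (mul_pos two_pos hβ) hp1)
  have hd2 : (β * (((k + 3 : ℕ) : ℝ) - 1)) ≠ 0 := ne_of_gt (mul_pos hβ hp1)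
  have hd3 : (β ^ 2 * ((k + 3 : ℕ) : ℝ) * (((k + 3 : ℕ) : ℝ) - 1)) ≠ 0 :=
    ne_of_gt (mul_pos (mul_pos (pow_pos hβ 2) hpR) hp1)
  have hsum : Aminus + Aplus = -E / (β * (((k + 3 : ℕ) : ℝ) - 1)) := by
    rw [hAm, hAp, ← add_div, div_eq_div_iff hd1 hd2]
    ring
  have hprod : Aminus * Aplus = 1 / (β ^ 2 * ((k + 3 : ℕ) : ℝ) * (((k + 3 : ℕ) : ℝ) - 1)) := by
    rw [hAm, hAp, div_mul_div_comm]
    have key : (-E - Real.sqrt (E ^ 2 - Einf ^ 2)) * (-E + Real.sqrt (E ^ 2 - Einf ^ 2))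
        = 4 * ((((k + 3 : ℕ) : ℝ) - 1) / ((k + 3 : ℕ) : ℝ)) := by
      linear_combination -hs + hEinf2
    rw [key]
    rw [div_eq_div_iff (mul_ne_zero hd1 hd1) hd3]
    field_simp
    ring
  -- build the derivative via combinators
  have h1 : HasDerivAt (fun x : ℝ => -β * x ^ (k + 3) * E)
      (-β * (((k + 3 : ℕ) : ℝ) * q ^ (k + 3 - 1)) * E) q :=
    ((hasDerivAt_pow (k + 3) q).const_mul (-β)).mul_const E
  have hin : HasDerivAt (fun x : ℝ => 1 - x ^ 2) (0 - ((2 : ℕ) : ℝ) * q ^ (2 - 1)) q :=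
    (hasDerivAt_const q (1:ℝ)).sub (hasDerivAt_pow 2 q)
  have h2 : HasDerivAt (fun x : ℝ => (1 / 2 : ℝ) * Real.log (1 - x ^ 2))
      ((1 / 2 : ℝ) * ((0 - ((2 : ℕ) : ℝ) * q ^ (2 - 1)) / (1 - q ^ 2))) q :=
    (hin.log hne).const_mul (1 / 2 : ℝ)
  have h3 : HasDerivAt
      (fun x : ℝ => β ^ 2 / 2 * (1 - x ^ (2 * (k + 3)) -
        ((k + 3 : ℕ) : ℝ) * x ^ (2 * (k + 3) - 2) * (1 - x ^ 2)))
      (β ^ 2 / 2 * ((0 - ((2 * (k + 3) : ℕ) : ℝ) * q ^ (2 * (k + 3) - 1)) -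
        (((k + 3 : ℕ) : ℝ) * ((((2 * (k + 3) - 2 : ℕ)) : ℝ) * q ^ (2 * (k + 3) - 2 - 1)) *
          (1 - q ^ 2) + ((k + 3 : ℕ) : ℝ) * q ^ (2 * (k + 3) - 2) *
          (0 - ((2 : ℕ) : ℝ) * q ^ (2 - 1))))) q := by
    exact (((hasDerivAt_const q (1:ℝ)).sub (hasDerivAt_pow (2 * (k + 3)) q)).sub
      (((hasDerivAt_pow (2 * (k + 3) - 2) q).const_mul ((k + 3 : ℕ) : ℝ)).mul hin)).const_mul
      (β ^ 2 / 2)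
  have total := (h1.add h2).add h3
  convert total using 1
  · rfl
  · rfl
  · rfl
  rw [mul_assoc]
  have hsum' : (Aminus + Aplus) * (β * (((k + 3 : ℕ) : ℝ) - 1)) = -E := by
    rw [hsum, div_mul_cancel₀ _ hd2]
  have hprod' : (Aminus * Aplus) * (β ^ 2 * ((k + 3 : ℕ) : ℝ) * (((k + 3 : ℕ) : ℝ) - 1)) = 1 := by
    rw [hprod, one_div, inv_mul_cancel₀ hd3]
  have hkey : β ^ 2 * ((k + 3 : ℕ) : ℝ) * (((k + 3 : ℕ) : ℝ) - 1) *
      (((1 - q ^ 2) * q ^ (k + 3 - 2) - Aminus) * ((1 - q ^ 2) * q ^ (k + 3 - 2) - Aplus))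
      = β ^ 2 * ((k + 3 : ℕ) : ℝ) * (((k + 3 : ℕ) : ℝ) - 1) * ((1 - q ^ 2) * q ^ (k + 3 - 2)) ^ 2
          + β * ((k + 3 : ℕ) : ℝ) * E * ((1 - q ^ 2) * q ^ (k + 3 - 2)) + 1 := by
    linear_combination
      (-(β * ((k + 3 : ℕ) : ℝ) * ((1 - q ^ 2) * q ^ (k + 3 - 2)))) * hsum' + hprod'
  rw [show -(β ^ 2 * ((k + 3 : ℕ) : ℝ) * (((k + 3 : ℕ) : ℝ) - 1) * q / (1 - q ^ 2))
      = -(q / (1 - q ^ 2)) * (β ^ 2 * ((k + 3 : ℕ) : ℝ) * (((k + 3 : ℕ) : ℝ) - 1)) from by ring,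
    mul_assoc, hkey]
  simp only [show (2 * (k + 3) : ℕ) = 2 * k + 6 from by ring,
    show (2 * (k + 3) - 2 : ℕ) = 2 * k + 4 from by omega,
    show (2 * (k + 3) - 1 : ℕ) = 2 * k + 5 from by omega,
    show (2 * (k + 3) - 2 - 1 : ℕ) = 2 * k + 3 from by omega,
    show (k + 3 - 1 : ℕ) = k + 2 from by omega,
    show (k + 3 - 2 : ℕ) = k + 1 from by omega,
    show (2 - 1 : ℕ) = 1 from rfl]
  field_simp
  push_cast
  ring
end

section
/- Let p ≥ 3 be an integer, E_∞ = -2 sqrt((p-1)/p), β > 0, E ≤ E_∞, and suppose q ∈ (0,1) satisfies the fixed-point equation (1-q^2) q^(p-2) = (-E - sqrt(E^2 - E_∞^2)) / (2 β (p-1)). Then, with F_RS(E,q,β) = -β q^p E + (1/2) log(1-q^2) + (β^2/2)(1 - q^(2p) - p q^(2p-2)(1-q^2)), one has ∂_q^2 F_RS(E,q,β) = -(β p^2 q^(p-2) / (1-q^2)) * sqrt(E^2 - E_∞^2) * (q^2 - (p-2)/p). In particular, if E < E_∞ and q^2 > (p-2)/p, then ∂_q^2 F_RS(E,q,β) < 0.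 -/
-- derivative lemma
lemma aux_deriv (k : ℕ) (β E : ℝ) (x : ℝ) (hx : 1 - x^2 ≠ 0) :
    HasDerivAt (fun y : ℝ => -β * y ^ (k+3) * E + (1 / 2) * Real.log (1 - y ^ 2) +
        β ^ 2 / 2 * (1 - y ^ (2*k+6) - ((k:ℝ)+3) * y ^ (2*k+4) * (1 - y ^ 2)))
      (-(β * ((k:ℝ)+3) * E * x^(k+2)) - x/(1-x^2)
        - β^2 * ((k:ℝ)+3) * ((k:ℝ)+2) * x^(2*k+3) * (1-x^2)) x := by
  have h1 : HasDerivAt (fun y : ℝ => -β * y^(k+3) * E)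
      (-β * (((k:ℝ)+3) * x^(k+2)) * E) x := by
    have h := (hasDerivAt_pow (k+3) x).const_mul (-β)
    have h' := h.mul_const E
    convert h' using 1
    · rfl
    · rfl
    push_cast
    ring
  have h2 : HasDerivAt (fun y : ℝ => 1 - y^2) (-(2*x)) x := by
    have h := (hasDerivAt_pow 2 x).const_sub 1
    convert h using 1
    · rfl
    · rfl
    push_cast
    ring
  have hlog : HasDerivAt (fun y : ℝ => (1/2 : ℝ) * Real.log (1 - y^2))
      ((1/2) * (-(2*x) / (1-x^2))) x := (h2.log hx).const_mul (1/2)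
  have h3 : HasDerivAt (fun y : ℝ => β^2/2 * (1 - y^(2*k+6) - ((k:ℝ)+3) * y^(2*k+4) * (1-y^2)))
      (β^2/2 * (0 - ((2*(k:ℝ)+6) * x^(2*k+5))
        - (((k:ℝ)+3) * ((2*(k:ℝ)+4) * x^(2*k+3)) * (1-x^2) + ((k:ℝ)+3) * x^(2*k+4) * (-(2*x))))) x := by
    have ha := hasDerivAt_pow (2*k+6) x
    have hb := ((hasDerivAt_pow (2*k+4) x).const_mul ((k:ℝ)+3)).mul h2
    have hc := ((hasDerivAt_const x (1:ℝ)).sub ha).sub hb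
    have hd := hc.const_mul (β^2/2)
    convert hd using 1
    · rfl
    · rfl
    · rfl
    have e1 : 2*k+6-1 = 2*k+5 := by omega
    have e2 : 2*k+4-1 = 2*k+3 := by omega
    rw [e1, e2]
    push_cast
    ring
  have := (h1.add hlog).add h3
  convert this using 1
  · rfl
  · rfl
  · rfl
  field_simp
  ring

lemma aux_deriv2 (k : ℕ) (β E : ℝ) (x : ℝ) (hx : 1 - x^2 ≠ 0) :
    HasDerivAt (fun y : ℝ => -(β * ((k:ℝ)+3) * E * y^(k+2)) - y/(1-y^2)
        - β^2 * ((k:ℝ)+3) * ((k:ℝ)+2) * y^(2*k+3) * (1-y^2))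
      (-(β * ((k:ℝ)+3) * E * (((k:ℝ)+2) * x^(k+1))) - (1+x^2)/(1-x^2)^2
        - β^2 * ((k:ℝ)+3) * ((k:ℝ)+2) * ((2*(k:ℝ)+3) * x^(2*k+2) * (1-x^2)
            + x^(2*k+3) * (-(2*x)))) x := by
  have h2 : HasDerivAt (fun y : ℝ => 1 - y^2) (-(2*x)) x := by
    have h := (hasDerivAt_pow 2 x).const_sub 1
    convert h using 1
    · rfl
    · rfl
    push_cast; ring
  have h1 : HasDerivAt (fun y : ℝ => -(β * ((k:ℝ)+3) * E * y^(k+2)))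
      (-(β * ((k:ℝ)+3) * E * (((k:ℝ)+2) * x^(k+1)))) x := by
    have h := ((hasDerivAt_pow (k+2) x).const_mul (β * ((k:ℝ)+3) * E)).neg
    convert h using 1
    · rfl
    · rfl
    · rfl
    have e1 : k+2-1 = k+1 := by omega
    rw [e1]; push_cast; ring
  have hdiv : HasDerivAt (fun y : ℝ => y/(1-y^2))
      ((1 * (1-x^2) - x * (-(2*x)))/(1-x^2)^2) x := (hasDerivAt_id x).div h2 hx
  have h3 : HasDerivAt (fun y : ℝ => β^2 * ((k:ℝ)+3) * ((k:ℝ)+2) * y^(2*k+3) * (1-y^2))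
      (β^2 * ((k:ℝ)+3) * ((k:ℝ)+2) * ((2*(k:ℝ)+3) * x^(2*k+2) * (1-x^2)
            + x^(2*k+3) * (-(2*x)))) x := by
    have h := (((hasDerivAt_pow (2*k+3) x).const_mul (β^2 * ((k:ℝ)+3) * ((k:ℝ)+2))).mul h2)
    convert h using 1
    · rfl
    · rfl
    · rfl
    have e1 : 2*k+3-1 = 2*k+2 := by omega
    rw [e1]; push_cast; ring
  have := (h1.sub hdiv).sub h3
  convert this using 1
  · rfl
  · rfl
  · rfl
  field_simp
  ring

set_option maxHeartbeats 1000000 in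
/-- Second `q`-derivative of the replica symmetric TAP free energy at a solution of the
fixed-point equation: `∂²_q F_RS(E,q,β) = -(β p² q^(p-2)/(1-q²)) sqrt(E²-E∞²) (q² - (p-2)/p)`;
in particular it is negative when `E < E∞` and `q² > (p-2)/p`. -/
theorem stmt_11 (p : ℕ) (hp : 3 ≤ p) (β : ℝ) (hβ : 0 < β)
    (Einf : ℝ) (hEinf : Einf = -2 * Real.sqrt (((p : ℝ) - 1) / p))
    (E : ℝ) (hE : E ≤ Einf)
    (q : ℝ) (hq : q ∈ Set.Ioo (0 : ℝ) 1)
    (hfp : (1 - q ^ 2) * q ^ (p - 2) =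
      (-E - Real.sqrt (E ^ 2 - Einf ^ 2)) / (2 * β * ((p : ℝ) - 1))) :
    iteratedDeriv 2 (fun q : ℝ => -β * q ^ p * E + (1 / 2) * Real.log (1 - q ^ 2) +
        β ^ 2 / 2 * (1 - q ^ (2 * p) - (p : ℝ) * q ^ (2 * p - 2) * (1 - q ^ 2))) q =
      -(β * (p : ℝ) ^ 2 * q ^ (p - 2) / (1 - q ^ 2)) * Real.sqrt (E ^ 2 - Einf ^ 2) *
        (q ^ 2 - ((p : ℝ) - 2) / p) ∧
    (E < Einf → ((p : ℝ) - 2) / p < q ^ 2 →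
      iteratedDeriv 2 (fun q : ℝ => -β * q ^ p * E + (1 / 2) * Real.log (1 - q ^ 2) +
        β ^ 2 / 2 * (1 - q ^ (2 * p) - (p : ℝ) * q ^ (2 * p - 2) * (1 - q ^ 2))) q < 0) := by
  obtain ⟨k, rfl⟩ : ∃ k, p = k + 3 := ⟨p - 3, by omega⟩
  obtain ⟨hq0, hq1⟩ := hq
  have hD : (0:ℝ) < 1 - q^2 := by nlinarith
  have hDne : (1:ℝ) - q^2 ≠ 0 := ne_of_gt hD
  -- rewrite exponents and casts
  simp only [show 2*(k+3) = 2*k+6 from by ring, show 2*(k+3)-2 = 2*k+4 from by omega,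
    show k+3-2 = k+1 from by omega] at hfp ⊢
  push_cast at hfp hEinf ⊢
  rw [show ((k:ℝ)+3-1) = (k:ℝ)+2 from by ring] at hfp hEinf
  set S := Real.sqrt (E^2 - Einf^2) with hSdef
  -- main derivative computation
  have hev : deriv (fun y : ℝ => -β * y ^ (k+3) * E + (1 / 2) * Real.log (1 - y ^ 2) +
        β ^ 2 / 2 * (1 - y ^ (2*k+6) - ((k:ℝ)+3) * y ^ (2*k+4) * (1 - y ^ 2)))
      =ᶠ[nhds q] (fun x : ℝ => -(β * ((k:ℝ)+3) * E * x^(k+2)) - x/(1-x^2)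
        - β^2 * ((k:ℝ)+3) * ((k:ℝ)+2) * x^(2*k+3) * (1-x^2)) := by
    have hopen : ∀ᶠ x in nhds q, 1 - x^2 ≠ 0 := by
      have hc : ContinuousAt (fun x : ℝ => 1 - x^2) q := by fun_prop
      exact hc.eventually_ne hDne
    filter_upwards [hopen] with x hx using (aux_deriv k β E x hx).deriv
  have key : iteratedDeriv 2 (fun y : ℝ => -β * y ^ (k+3) * E + (1 / 2) * Real.log (1 - y ^ 2) +
        β ^ 2 / 2 * (1 - y ^ (2*k+6) - ((k:ℝ)+3) * y ^ (2*k+4) * (1 - y ^ 2))) q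
      = (-(β * ((k:ℝ)+3) * E * (((k:ℝ)+2) * q^(k+1))) - (1+q^2)/(1-q^2)^2
        - β^2 * ((k:ℝ)+3) * ((k:ℝ)+2) * ((2*(k:ℝ)+3) * q^(2*k+2) * (1-q^2)
            + q^(2*k+3) * (-(2*q)))) := by
    rw [iteratedDeriv_succ, iteratedDeriv_one, hev.deriv_eq]
    exact (aux_deriv2 k β E q hDne).deriv
  -- algebraic facts
  have hpne : ((k:ℝ)+3) ≠ 0 := by positivity
  have hEinf2 : Einf^2 = 4*(((k:ℝ)+2)/((k:ℝ)+3)) := by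
    rw [hEinf, mul_pow, neg_pow, Real.sq_sqrt (by positivity)]
    ring
  have hEinfneg : Einf ≤ 0 := by
    rw [hEinf]
    have := Real.sqrt_nonneg (((k:ℝ)+2)/((k:ℝ)+3))
    nlinarith
  have hS2 : S^2 = E^2 - Einf^2 := Real.sq_sqrt (by nlinarith)
  have hS : S = -E - 2*(β*((k:ℝ)+2)*((1-q^2)*q^(k+1))) := by
    have hne : 2*β*((k:ℝ)+2) ≠ 0 := by positivity
    field_simp at hfp
    linarith [hfp]
  have main : iteratedDeriv 2 (fun y : ℝ => -β * y ^ (k+3) * E + (1 / 2) * Real.log (1 - y ^ 2) +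
        β ^ 2 / 2 * (1 - y ^ (2*k+6) - ((k:ℝ)+3) * y ^ (2*k+4) * (1 - y ^ 2))) q
      = -(β * ((k:ℝ)+3) ^ 2 * q ^ (k+1) / (1 - q ^ 2)) * S * (q ^ 2 - ((k:ℝ)+3 - 2) / ((k:ℝ)+3)) := by
    rw [key]
    have hA2 : (E + 2*(β*((k:ℝ)+2)*((1-q^2)*q^(k+1))))^2 = E^2 - 4*(((k:ℝ)+2)/((k:ℝ)+3)) := by
      rw [← hEinf2, ← hS2, hS]; ring
    have h22 : q^(2*k+2) = (q^(k+1))^2 := by rw [← pow_mul]; ring_nf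
    have h23 : q^(2*k+3) = (q^(k+1))^2 * q := by
      have h : 2*k+3 = (k+1) + (k+1) + 1 := by omega
      rw [h, pow_add, pow_add, pow_one]; ring
    rw [hS, h22, h23]
    generalize q^(k+1) = t at hA2 ⊢
    field_simp
    field_simp at hA2
    refine mul_right_cancel₀ (show ((k:ℝ)+2) ≠ 0 by positivity) ?_
    linear_combination (-(1+q^2)/4) * hA2
  refine ⟨main, fun hElt hq2 => ?_⟩
  rw [main]
  have hSpos : 0 < S := Real.sqrt_pos.mpr (by nlinarith)
  have hpos : 0 < β * ((k:ℝ)+3) ^ 2 * q ^ (k+1) / (1 - q ^ 2) := by positivity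
  have hq2' : 0 < q ^ 2 - ((k:ℝ)+3 - 2) / ((k:ℝ)+3) := by linarith
  nlinarith [mul_pos (mul_pos hpos hSpos) hq2']
end

section
/- Let p ≥ 3 be an integer, E_∞ = -2 sqrt((p-1)/p), β > 0, and suppose q_** ∈ (sqrt((p-2)/p), 1) satisfies (1-q_**^2) q_**^(p-2) = 1/(β sqrt(p(p-1))). Then for every E < E_∞, ∂_q F_RS(E, q_**, β) > 0, where F_RS(E,q,β) = -β q^p E + (1/2) log(1-q^2) + (β^2/2)(1 - q^(2p) - p q^(2p-2)(1-q^2)). -/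
/-- If `q_** ∈ (sqrt((p-2)/p), 1)` satisfies `(1-q_**²) q_**^(p-2) = 1/(β sqrt(p(p-1)))`,
then for every `E < E∞`, `∂_q F_RS(E, q_**, β) > 0`. -/
theorem stmt_14 (p : ℕ) (hp : 3 ≤ p) (β : ℝ) (hβ : 0 < β)
    (Einf : ℝ) (hEinf : Einf = -2 * Real.sqrt (((p : ℝ) - 1) / p))
    (qss : ℝ) (hqss : qss ∈ Set.Ioo (Real.sqrt (((p : ℝ) - 2) / p)) 1)
    (hfp : (1 - qss ^ 2) * qss ^ (p - 2) = 1 / (β * Real.sqrt ((p : ℝ) * ((p : ℝ) - 1))))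
    (E : ℝ) (hE : E < Einf) :
    0 < deriv (fun q : ℝ => -β * q ^ p * E + (1 / 2) * Real.log (1 - q ^ 2) +
        β ^ 2 / 2 * (1 - q ^ (2 * p) - (p : ℝ) * q ^ (2 * p - 2) * (1 - q ^ 2))) qss := by
  obtain ⟨k, rfl⟩ : ∃ k, p = k + 3 := ⟨p - 3, by omega⟩
  obtain ⟨hql, hq1⟩ := hqss
  set q := qss with hq_def
  have hq0 : 0 < q := lt_of_le_of_lt (Real.sqrt_nonneg _) hql
  have ht : 0 < 1 - q ^ 2 := by nlinarith
  set s := Real.sqrt ((↑(k + 3) : ℝ) * ((↑(k + 3) : ℝ) - 1)) with hs_def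
  have hkR : ((k : ℝ)) ≥ 0 := Nat.cast_nonneg k
  have hs_pos : 0 < s := Real.sqrt_pos.mpr (by push_cast; nlinarith)
  have hs2 : s ^ 2 = (↑(k + 3) : ℝ) * ((↑(k + 3) : ℝ) - 1) :=
    Real.sq_sqrt (by push_cast; nlinarith)
  have hbs : 0 < β * s := mul_pos hβ hs_pos
  have hfp' : (1 - q ^ 2) * q ^ (k + 1) = 1 / (β * s) := by
    have : k + 3 - 2 = k + 1 := by omega
    rw [← this]; exact hfp
  have h1 : β * s * ((1 - q ^ 2) * q ^ (k + 1)) = 1 := by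
    rw [hfp', mul_one_div, div_self hbs.ne']
  have ht_inv : (1 - q ^ 2)⁻¹ = β * s * q ^ (k + 1) :=
    inv_eq_of_mul_eq_one_right (by linear_combination h1)
  have hp0 : (0 : ℝ) < (k : ℝ) + 3 := by positivity
  have hEinf2 : Einf = -2 * (s / ((k : ℝ) + 3)) := by
    rw [hEinf]
    congr 1
    rw [show ((↑(k + 3) : ℝ) - 1) / (↑(k + 3) : ℝ) = (s / ((k : ℝ) + 3)) ^ 2 by
      rw [div_pow, hs2]; push_cast; field_simp]
    exact Real.sqrt_sq (by positivity)
  -- derivative computation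
  have hq2 : HasDerivAt (fun x : ℝ => 1 - x ^ 2) (-((2 : ℕ) * q ^ (2 - 1))) q :=
    (hasDerivAt_pow 2 q).const_sub 1
  have d1 : HasDerivAt (fun x : ℝ => -β * x ^ (k + 3) * E)
      (-β * ((↑(k + 3) : ℝ) * q ^ (k + 3 - 1)) * E) q :=
    ((hasDerivAt_pow (k + 3) q).const_mul (-β)).mul_const E
  have d2 : HasDerivAt (fun x : ℝ => (1 / 2 : ℝ) * Real.log (1 - x ^ 2))
      ((1 / 2 : ℝ) * (-((2 : ℕ) * q ^ (2 - 1)) / (1 - q ^ 2))) q :=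
    (hq2.log ht.ne').const_mul (1 / 2)
  have d3a : HasDerivAt (fun x : ℝ => x ^ (2 * (k + 3)))
      ((↑(2 * (k + 3)) : ℝ) * q ^ (2 * (k + 3) - 1)) q := hasDerivAt_pow _ q
  have d3b : HasDerivAt (fun x : ℝ => (↑(k + 3) : ℝ) * x ^ (2 * (k + 3) - 2) * (1 - x ^ 2))
      (((↑(k + 3) : ℝ) * ((↑(2 * (k + 3) - 2) : ℝ) * q ^ (2 * (k + 3) - 2 - 1))) * (1 - q ^ 2)
        + ((↑(k + 3) : ℝ) * q ^ (2 * (k + 3) - 2)) * (-((2 : ℕ) * q ^ (2 - 1)))) q :=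
    ((hasDerivAt_pow (2 * (k + 3) - 2) q).const_mul (↑(k + 3) : ℝ)).mul hq2
  have d3 : HasDerivAt (fun x : ℝ => β ^ 2 / 2 *
      (1 - x ^ (2 * (k + 3)) - (↑(k + 3) : ℝ) * x ^ (2 * (k + 3) - 2) * (1 - x ^ 2)))
      (β ^ 2 / 2 * (-((↑(2 * (k + 3)) : ℝ) * q ^ (2 * (k + 3) - 1)) -
        (((↑(k + 3) : ℝ) * ((↑(2 * (k + 3) - 2) : ℝ) * q ^ (2 * (k + 3) - 2 - 1))) * (1 - q ^ 2)
        + ((↑(k + 3) : ℝ) * q ^ (2 * (k + 3) - 2)) * (-((2 : ℕ) * q ^ (2 - 1)))))) q :=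
    ((d3a.const_sub 1).sub d3b).const_mul (β ^ 2 / 2)
  have hD := (d1.add d2).add d3
  erw [hD.deriv]
  have hEpos : 0 < Einf - E := sub_pos.mpr hE
  have hpos : 0 < β * ((k : ℝ) + 3) * q ^ (k + 2) * (Einf - E) := by
    apply mul_pos (mul_pos (mul_pos hβ hp0) (pow_pos hq0 _)) hEpos
  refine lt_of_lt_of_eq hpos ?_
  simp only [show k + 3 - 1 = k + 2 from by omega, show 2 * (k + 3) - 1 = 2 * k + 5 from by omega,
    show 2 * (k + 3) - 2 = 2 * k + 4 from by omega, show 2 * k + 4 - 1 = 2 * k + 3 from by omega,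
    show 2 - 1 = 1 from rfl]
  rw [hEinf2]
  push_cast at hs2 ⊢
  rw [show -((2 : ℝ) * q ^ 1) / (1 - q ^ 2) = -(2 * q ^ 1) * (β * s * q ^ (k + 1)) from by
    rw [div_eq_mul_inv, ht_inv]]
  field_simp
  linear_combination (2 * s * q ^ (k + 2)) * h1
    - (2 * β * q ^ (2 * k + 3) * (1 - q ^ 2)) * hs2
end

section
/- Let p ≥ 3 be an integer, E_∞ = -2 sqrt((p-1)/p), and β_sh = sqrt((p-1)^(p-1)/(p (p-2)^(p-2))). Then for every β ≥ β_sh and every q with sqrt((p-2)/(p-1)) < q ≤ 1, one has -β q^p - E_∞ + p E_∞ / (2(p-1)) < 0. -/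
/-- For `β ≥ β_sh` and `sqrt((p-2)/(p-1)) < q ≤ 1`:
`-β q^p - E∞ + p E∞/(2(p-1)) < 0`, where `E∞ = -2 sqrt((p-1)/p)` and
`β_sh = sqrt((p-1)^(p-1)/(p (p-2)^(p-2)))`. -/
theorem stmt_15 (p : ℕ) (hp : 3 ≤ p)
    (Einf : ℝ) (hEinf : Einf = -2 * Real.sqrt (((p : ℝ) - 1) / p))
    (βsh : ℝ)
    (hβsh : βsh = Real.sqrt (((p : ℝ) - 1) ^ (p - 1) / ((p : ℝ) * ((p : ℝ) - 2) ^ (p - 2))))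
    (β : ℝ) (hβ : βsh ≤ β)
    (q : ℝ) (hq1 : Real.sqrt (((p : ℝ) - 2) / ((p : ℝ) - 1)) < q) (hq2 : q ≤ 1) :
    -β * q ^ p - Einf + (p : ℝ) * Einf / (2 * ((p : ℝ) - 1)) < 0 := by
  obtain ⟨m, rfl⟩ : ∃ m, p = m + 3 := ⟨p - 3, by omega⟩
  have hm1 : (0:ℝ) < (m:ℝ) + 1 := by positivity
  have hm2 : (0:ℝ) < (m:ℝ) + 2 := by positivity
  have hm3 : (0:ℝ) < (m:ℝ) + 3 := by positivity
  -- simplify casts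
  have hc1 : ((m + 3 : ℕ) : ℝ) - 1 = (m:ℝ) + 2 := by push_cast; ring
  have hc2 : ((m + 3 : ℕ) : ℝ) - 2 = (m:ℝ) + 1 := by push_cast; ring
  have hc3 : ((m + 3 : ℕ) : ℝ) = (m:ℝ) + 3 := by push_cast; ring
  have hn1 : m + 3 - 1 = m + 2 := by omega
  have hn2 : m + 3 - 2 = m + 1 := by omega
  set A : ℝ := ((m:ℝ) + 1) / ((m:ℝ) + 2) with hA
  have hA0 : 0 ≤ A := by positivity
  set S : ℝ := Real.sqrt A with hS
  have hSq : S < q := by rw [hS, hA, ← hc1, ← hc2]; exact hq1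
  have hS0 : 0 ≤ S := Real.sqrt_nonneg _
  have hq0 : 0 < q := lt_of_le_of_lt hS0 hSq
  set D : ℝ := ((m:ℝ) + 2) / ((m:ℝ) + 3) with hD
  have hD0 : 0 ≤ D := by positivity
  set C : ℝ := Real.sqrt D * (((m:ℝ) + 1) / ((m:ℝ) + 2)) with hC
  have hβsh' : βsh = Real.sqrt (((m:ℝ)+2) ^ (m+2) / (((m:ℝ)+3) * ((m:ℝ)+1) ^ (m+1))) := by
    rw [hβsh, hc1, hc2, hc3, hn1, hn2]
  have hkey : βsh * S ^ (m+3) = C := by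
    have hpow : S ^ (m+3) = Real.sqrt (A ^ (m+3)) := by
      symm
      rw [Real.sqrt_eq_iff_eq_sq (by positivity) (by positivity), eq_comm]
      rw [hS, ← pow_mul, mul_comm, pow_mul, Real.sq_sqrt hA0]
    rw [hβsh', hpow, ← Real.sqrt_mul (by positivity)]
    have : C = Real.sqrt (D * (((m:ℝ)+1)/((m:ℝ)+2))^2) := by
      rw [Real.sqrt_mul hD0, Real.sqrt_sq (by positivity)]
    rw [this]
    congr 1
    rw [hA, hD]
    rw [div_pow, div_pow]
    field_simp
    ring
  have hβsh0 : 0 ≤ βsh := by rw [hβsh']; positivity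
  have hqp : S ^ (m+3) < q ^ (m+3) := by
    exact pow_lt_pow_left₀ hSq hS0 (by omega)
  have hβ0 : 0 < β := by
    have : 0 < βsh := by
      rw [hβsh']; apply Real.sqrt_pos.mpr; positivity
    linarith
  have hmain : C < β * q ^ (m+3) := by
    calc C = βsh * S ^ (m+3) := hkey.symm
    _ ≤ β * S ^ (m+3) := by apply mul_le_mul_of_nonneg_right hβ (by positivity)
    _ < β * q ^ (m+3) := by apply mul_lt_mul_of_pos_left hqp hβ0
  have hEq : -β * q ^ (m+3) - Einf + ((m+3:ℕ) : ℝ) * Einf / (2 * (((m+3:ℕ):ℝ) - 1))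
      = C - β * q ^ (m+3) := by
    rw [hEinf, hc1, hc3, hC, hD]
    field_simp
    ring
  rw [hEq]
  linarith
end

section
/- Let p ≥ 3 be an integer, E_∞ = -2 sqrt((p-1)/p), β > 0, E < E_∞, and suppose q_** ∈ (sqrt((p-2)/p), 1) satisfies (1-q_**^2) q_**^(p-2) = 1/(β sqrt(p(p-1))). Then there is a unique q_* ∈ (q_**, 1) with (1-q_*^2) q_*^(p-2) = (-E - sqrt(E^2 - E_∞^2))/(2β(p-1)), and for every q ∈ (q_**, 1): ∂_q F_RS(E,q,β) > 0 if q < q_*, ∂_q F_RS(E,q,β) = 0 if q = q_*, and ∂_q F_RS(E,q,β) < 0 if q > q_*, where F_RS(E,q,β) = -β q^p E + (1/2) log(1-q^2) + (β^2/2)(1 - q^(2p) - p q^(2p-2)(1-q^2)). -/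
open Real Set

set_option maxHeartbeats 1600000

/-- For `E < E∞` and `q_** ∈ (sqrt((p-2)/p),1)` with `(1-q_**²)q_**^(p-2) = 1/(β sqrt(p(p-1)))`,
there is a unique `q_* ∈ (q_**,1)` solving `(1-q_*²)q_*^(p-2) = (-E - sqrt(E²-E∞²))/(2β(p-1))`,
and on `(q_**,1)` the `q`-derivative of `F_RS(E,·,β)` is positive before `q_*`, zero at `q_*`,
and negative after `q_*`. -/
theorem stmt_16 (p : ℕ) (hp : 3 ≤ p) (β : ℝ) (hβ : 0 < β)
    (Einf : ℝ) (hEinf : Einf = -2 * Real.sqrt (((p : ℝ) - 1) / p))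
    (E : ℝ) (hE : E < Einf)
    (qss : ℝ) (hqss : qss ∈ Set.Ioo (Real.sqrt (((p : ℝ) - 2) / p)) 1)
    (hfpss : (1 - qss ^ 2) * qss ^ (p - 2) = 1 / (β * Real.sqrt ((p : ℝ) * ((p : ℝ) - 1)))) :
    (∃! qs : ℝ, qs ∈ Set.Ioo qss 1 ∧
      (1 - qs ^ 2) * qs ^ (p - 2) =
        (-E - Real.sqrt (E ^ 2 - Einf ^ 2)) / (2 * β * ((p : ℝ) - 1))) ∧
    (∀ qs : ℝ, qs ∈ Set.Ioo qss 1 →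
      (1 - qs ^ 2) * qs ^ (p - 2) =
        (-E - Real.sqrt (E ^ 2 - Einf ^ 2)) / (2 * β * ((p : ℝ) - 1)) →
      ∀ q ∈ Set.Ioo qss 1,
        (q < qs → 0 < deriv (fun q : ℝ => -β * q ^ p * E + (1 / 2) * Real.log (1 - q ^ 2) +
          β ^ 2 / 2 * (1 - q ^ (2 * p) - (p : ℝ) * q ^ (2 * p - 2) * (1 - q ^ 2))) q) ∧
        (q = qs → deriv (fun q : ℝ => -β * q ^ p * E + (1 / 2) * Real.log (1 - q ^ 2) +
          β ^ 2 / 2 * (1 - q ^ (2 * p) - (p : ℝ) * q ^ (2 * p - 2) * (1 - q ^ 2))) q = 0) ∧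
        (qs < q → deriv (fun q : ℝ => -β * q ^ p * E + (1 / 2) * Real.log (1 - q ^ 2) +
          β ^ 2 / 2 * (1 - q ^ (2 * p) - (p : ℝ) * q ^ (2 * p - 2) * (1 - q ^ 2))) q < 0)) := by
  obtain ⟨m, rfl⟩ : ∃ m, p = m + 3 := ⟨p - 3, by omega⟩
  clear hp
  have e1 : m + 3 - 2 = m + 1 := by omega
  have e2 : 2 * (m + 3) - 2 = 2*m + 4 := by omega
  have e3 : 2 * (m + 3) = 2*m + 6 := by omega
  have e4 : 2 * m + 6 - 2 = 2*m + 4 := by omega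
  simp only [e1, e2, e3, e4] at hfpss ⊢
  set P : ℝ := ((m+3 : ℕ) : ℝ) with hPdef
  have hP : P = (m:ℝ) + 3 := by rw [hPdef]; push_cast; ring
  clear_value P
  have hm0 : (0:ℝ) ≤ (m:ℝ) := Nat.cast_nonneg m
  have hPpos : 0 < P := by rw [hP]; linarith
  have hP1 : (0:ℝ) < P - 1 := by rw [hP]; linarith
  have hP2 : (0:ℝ) < P - 2 := by rw [hP]; linarith
  set s : ℝ := Real.sqrt (E^2 - Einf^2) with hsdef
  clear_value s
  -- basic sign facts
  have hEinfneg : Einf < 0 := by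
    rw [hEinf]
    have : 0 < Real.sqrt ((P - 1) / P) := Real.sqrt_pos.mpr (div_pos hP1 hPpos)
    linarith
  have hEneg : E < 0 := lt_trans hE hEinfneg
  have hEinf2 : Einf^2 = 4 * ((P - 1) / P) := by
    rw [hEinf, mul_pow, Real.sq_sqrt (le_of_lt (div_pos hP1 hPpos))]
    ring
  have hE2 : Einf^2 < E^2 := by nlinarith
  have hs2 : s^2 = E^2 - Einf^2 := by rw [hsdef]; exact Real.sq_sqrt (by linarith)
  have hspos : 0 < s := by rw [hsdef]; exact Real.sqrt_pos.mpr (by linarith)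
  have hsltE : s < -E := by
    rw [hsdef]
    exact (Real.sqrt_lt' (by linarith)).mpr (by nlinarith)
  -- overlap function g
  set g : ℝ → ℝ := fun q => (1 - q^2) * q^(m+1) with hgdef
  clear_value g
  have hqss0 : 0 < qss := lt_of_le_of_lt (Real.sqrt_nonneg _) hqss.1
  have hqss1 : qss < 1 := hqss.2
  -- g is strictly decreasing on [qss, 1]
  have hg_deriv : ∀ x : ℝ, HasDerivAt g (x^m * ((P - 2) - P * x^2)) x := by
    intro x
    rw [hgdef]
    have h1 : HasDerivAt (fun y:ℝ => 1 - y^2) (-(2*x)) x := by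
      simpa using (hasDerivAt_pow 2 x).const_sub 1
    have h2 : HasDerivAt (fun y:ℝ => y^(m+1)) (((m:ℝ)+1) * x^m) x := by
      simpa using hasDerivAt_pow (m+1) x
    have := h1.mul h2
    refine this.congr_deriv ?_
    rw [hP]; ring
  have hgcont : Continuous g := by
    rw [hgdef]
    exact (continuous_const.sub (continuous_pow 2)).mul (continuous_pow (m+1))
  have hgSA : StrictAntiOn g (Icc qss 1) := by
    apply strictAntiOn_of_deriv_neg (convex_Icc _ _)
    · exact hgcont.continuousOn
    · intro x hx
      rw [interior_Icc] at hx
      rw [(hg_deriv x).deriv]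
      have hx0 : 0 < x := lt_trans hqss0 hx.1
      have hsq : (P - 2)/P < x^2 :=
        (Real.sqrt_lt' hx0).mp (lt_trans hqss.1 hx.1)
      have h2 : (P - 2) - P * x^2 < 0 := by
        rw [div_lt_iff₀ hPpos] at hsq; nlinarith
      exact mul_neg_of_pos_of_neg (pow_pos hx0 m) h2
  -- the target value and the larger root
  set mv : ℝ := (-E - s) / (2 * β * (P - 1)) with hmvdef
  set yp : ℝ := (-E + s) / (2 * β * (P - 1)) with hypdef
  clear_value mv yp
  have hmvpos : 0 < mv := by rw [hmvdef]; exact div_pos (by linarith) (by positivity)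
  -- rewrite the fixed point value of g at qss
  have hst : Real.sqrt ((P-1)/P) * Real.sqrt (P*(P-1)) = P - 1 := by
    rw [← Real.sqrt_mul (le_of_lt (div_pos hP1 hPpos))]
    rw [show (P-1)/P * (P*(P-1)) = (P-1)^2 by field_simp]
    exact Real.sqrt_sq hP1.le
  have htpos : 0 < Real.sqrt (P*(P-1)) :=
    Real.sqrt_pos.mpr (by positivity)
  have hgss : g qss = (-Einf) / (2 * β * (P - 1)) := by
    rw [hgdef]
    simp only
    rw [hfpss, hEinf]
    rw [div_eq_div_iff (by positivity) (by positivity)]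
    linear_combination (-2) * β * hst
  have hm_lt_gss : mv < g qss := by
    rw [hgss, hmvdef]
    have hkey : Einf - E < s := by
      rw [hsdef]
      refine (Real.lt_sqrt (by linarith)).mpr ?_
      nlinarith [mul_pos (neg_pos.mpr hEinfneg) (sub_pos.mpr hE)]
    rw [div_lt_div_iff₀ (by positivity) (by positivity)]
    exact mul_lt_mul_of_pos_right (by linarith) (by positivity)
  have hgss_lt_yp : g qss < yp := by
    rw [hgss, hypdef]
    rw [div_lt_div_iff₀ (by positivity) (by positivity)]
    exact mul_lt_mul_of_pos_right (by linarith) (by positivity)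
  -- existence of the fixed point qs via IVT
  have hcont : ContinuousOn g (Icc qss 1) := hgcont.continuousOn
  have hg1 : g 1 = 0 := by rw [hgdef]; norm_num
  have hmem : mv ∈ Ioo (g 1) (g qss) := by rw [hg1]; exact ⟨hmvpos, hm_lt_gss⟩
  obtain ⟨qs, hqsmem, hqseq⟩ := intermediate_value_Ioo' hqss1.le hcont hmem
  -- quadratic factorization
  have hquad : ∀ y : ℝ, β^2*P*(P-1)*((y - mv)*(yp - y)) = -(β^2*P*(P-1))*y^2 - β*P*E*y - 1 := by
    intro y
    have key1 : β^2*P*(P-1)*(mv + yp) = -(β*P*E) := by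
      rw [hmvdef, hypdef]; field_simp; ring
    have key2 : β^2*P*(P-1)*(mv*yp) = 1 := by
      rw [hmvdef, hypdef, div_mul_div_comm]
      rw [show (-E - s)*(-E + s) = E^2 - s^2 by ring, hs2]
      rw [show E^2 - (E^2 - Einf^2) = Einf^2 by ring, hEinf2]
      field_simp
      ring
    linear_combination y * key1 - key2
  -- derivative formula
  have hderivF : ∀ q ∈ Ioo qss 1,
      deriv (fun q : ℝ => -β * q ^ (m+3) * E + 1 / 2 * Real.log (1 - q ^ 2) +
          β ^ 2 / 2 * (1 - q ^ (2*m+6) - P * q ^ (2*m+4) * (1 - q ^ 2))) q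
        = q / (1 - q^2) * (β^2*P*(P-1) * ((g q - mv) * (yp - g q))) := by
    intro q hq
    have hq0 : 0 < q := lt_trans hqss0 hq.1
    have hq1 : q < 1 := hq.2
    have h1q2 : 0 < 1 - q^2 := by nlinarith
    have hne : (1:ℝ) - q^2 ≠ 0 := ne_of_gt h1q2
    have hsq : HasDerivAt (fun x:ℝ => 1 - x^2) (-(2*q)) q := by
      simpa using (hasDerivAt_pow 2 q).const_sub 1
    have h0 : HasDerivAt (fun x:ℝ => x^(m+3)) (((m:ℝ)+3) * q^(m+2)) q := by
      have := hasDerivAt_pow (m+3) q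
      norm_num at this
      convert this using 1 <;> (push_cast; ring)
    have h6 : HasDerivAt (fun x:ℝ => x^(2*m+6)) ((2*(m:ℝ)+6) * q^(2*m+5)) q := by
      have := hasDerivAt_pow (2*m+6) q
      norm_num at this
      convert this using 1 <;> (push_cast; ring)
    have h4 : HasDerivAt (fun x:ℝ => x^(2*m+4)) ((2*(m:ℝ)+4) * q^(2*m+3)) q := by
      have := hasDerivAt_pow (2*m+4) q
      norm_num at this
      convert this using 1 <;> (push_cast; ring)
    have hA : HasDerivAt (fun x:ℝ => -β * x^(m+3) * E)
        (-β * (((m:ℝ)+3) * q^(m+2)) * E) q := (h0.const_mul (-β)).mul_const E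
    have hB : HasDerivAt (fun x:ℝ => 1/2 * Real.log (1 - x^2))
        (1/2 * (-(2*q) / (1 - q^2))) q := (hsq.log hne).const_mul (1/2)
    have hC : HasDerivAt (fun x:ℝ => β^2/2 * (1 - x^(2*m+6) - P * x^(2*m+4) * (1 - x^2)))
        (β^2/2 * (0 - (2*(m:ℝ)+6) * q^(2*m+5) -
          (P * ((2*(m:ℝ)+4) * q^(2*m+3)) * (1 - q^2) + P * q^(2*m+4) * (-(2*q))))) q := by
      exact (((hasDerivAt_const q (1:ℝ)).sub h6).sub ((h4.const_mul P).mul hsq)).const_mul (β^2/2)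
    have hF : HasDerivAt (fun q : ℝ => -β * q ^ (m+3) * E + 1 / 2 * Real.log (1 - q ^ 2) +
        β ^ 2 / 2 * (1 - q ^ (2*m+6) - P * q ^ (2*m+4) * (1 - q ^ 2))) _ q := (hA.add hB).add hC
    rw [hF.deriv]
    rw [hquad (g q)]
    rw [hgdef]
    simp only
    rw [hP]
    field_simp
    ring
  -- helper: memberships and sign facts
  have hIcc : ∀ q ∈ Ioo qss 1, q ∈ Icc qss 1 := fun q hq => ⟨hq.1.le, hq.2.le⟩
  have hgylt : ∀ q ∈ Ioo qss 1, g q < yp := by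
    intro q hq
    have : g q < g qss := hgSA (left_mem_Icc.mpr hqss1.le) (hIcc q hq) hq.1
    linarith
  constructor
  · have hqseq' : (1 - qs^2) * qs^(m+1) = mv := by rw [← hqseq, hgdef]
    exact ⟨qs, ⟨hqsmem, hqseq'⟩, fun q' ⟨hq'mem, hq'eq⟩ =>
      hgSA.injOn (hIcc q' hq'mem) (hIcc qs hqsmem) (by
        rw [hgdef]; simp only
        rw [hq'eq, ← hqseq, hgdef])⟩
  · intro qs' hmem' heq' q hq
    have hgq' : g qs' = mv := by rw [hgdef]; simpa using heq'
    have hq0 : 0 < q := lt_trans hqss0 hq.1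
    have h1q2 : 0 < 1 - q^2 := by nlinarith [hq.2]
    have hCpos : 0 < q / (1 - q^2) := div_pos hq0 h1q2
    have hBpos : 0 < β^2*P*(P-1) := by positivity
    have hyppos : 0 < yp - g q := sub_pos.mpr (hgylt q hq)
    refine ⟨?_, ?_, ?_⟩
    · intro hlt
      rw [hderivF q hq]
      have h1 : mv < g q := by
        rw [← hgq']; exact hgSA (hIcc q hq) (hIcc qs' hmem') hlt
      exact mul_pos hCpos (mul_pos hBpos (mul_pos (by linarith) hyppos))
    · intro heq
      rw [hderivF q hq]
      have h1 : g q = mv := by rw [heq]; exact hgq'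
      rw [h1, sub_self]
      ring
    · intro hlt
      rw [hderivF q hq]
      have h1 : g q < mv := by
        rw [← hgq']; exact hgSA (hIcc qs' hmem') (hIcc q hq) hlt
      exact mul_neg_of_pos_of_neg hCpos
        (mul_neg_of_pos_of_neg hBpos (mul_neg_of_neg_of_pos (by linarith) hyppos))
end

section
/- Let p ≥ 3 be an integer, E_∞ = -2 sqrt((p-1)/p), β > 0, E < E_∞, and q ∈ (0,1). Suppose that (1-q^2) q^(p-2) = (-E - sqrt(E^2 - E_∞^2))/(2β(p-1)) and that -β q^p - ((p-2)/(2(p-1))) E + (p/(2(p-1))) sqrt(E^2 - E_∞^2) = 0. Then E = -β (q^p + p (1-q^2) q^(p-2)), and moreover -q^p E + β (1 - q^(2p) - p q^(2p-2)(1-q^2)) = β. -/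
/-- At a critical point of `V(E,q) = F_RS(E,q,β) + Θ(E)` (the fixed-point equation for `q` and
`∂_E V = 0`), one has `E = -β(q^p + p(1-q²)q^(p-2))` and
`-q^p E + β(1 - q^(2p) - p q^(2p-2)(1-q²)) = β`. -/
theorem stmt_18 (p : ℕ) (hp : 3 ≤ p) (β : ℝ) (hβ : 0 < β)
    (Einf : ℝ) (hEinf : Einf = -2 * Real.sqrt (((p : ℝ) - 1) / p))
    (E : ℝ) (hE : E < Einf)
    (q : ℝ) (hq : q ∈ Set.Ioo (0 : ℝ) 1)
    (hfp : (1 - q ^ 2) * q ^ (p - 2) =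
      (-E - Real.sqrt (E ^ 2 - Einf ^ 2)) / (2 * β * ((p : ℝ) - 1)))
    (hcrit : -β * q ^ p - (((p : ℝ) - 2) / (2 * ((p : ℝ) - 1))) * E +
      ((p : ℝ) / (2 * ((p : ℝ) - 1))) * Real.sqrt (E ^ 2 - Einf ^ 2) = 0) :
    E = -β * (q ^ p + (p : ℝ) * (1 - q ^ 2) * q ^ (p - 2)) ∧
    -q ^ p * E + β * (1 - q ^ (2 * p) - (p : ℝ) * q ^ (2 * p - 2) * (1 - q ^ 2)) = β := by
  set S := Real.sqrt (E ^ 2 - Einf ^ 2) with hS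
  have hp3 : (3 : ℝ) ≤ (p : ℝ) := by exact_mod_cast hp
  have hp1 : ((p : ℝ) - 1) ≠ 0 := by linarith
  have hd : 2 * β * ((p : ℝ) - 1) ≠ 0 := by
    have : (0:ℝ) < (p:ℝ) - 1 := by linarith
    positivity
  have hd2 : 2 * ((p : ℝ) - 1) ≠ 0 := by
    have : (0:ℝ) < (p:ℝ) - 1 := by linarith
    positivity
  have h1 : (1 - q ^ 2) * q ^ (p - 2) * (2 * β * ((p : ℝ) - 1)) = -E - S :=
    (eq_div_iff hd).mp hfp
  have h2 : -β * q ^ p * (2 * ((p : ℝ) - 1)) - ((p : ℝ) - 2) * E + (p : ℝ) * S = 0 := by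
    have := hcrit
    field_simp at this
    linarith [this]
  have hE1 : E = -β * (q ^ p + (p : ℝ) * (1 - q ^ 2) * q ^ (p - 2)) := by
    have hcomb : 2 * ((p : ℝ) - 1) * (E + β * (q ^ p + (p : ℝ) * (1 - q ^ 2) * q ^ (p - 2)))
        = 0 := by linear_combination (-1 : ℝ) * h2 + (p : ℝ) * h1
    have := mul_eq_zero.mp hcomb
    rcases this with h | h
    · exact absurd h hd2
    · linarith
  refine ⟨hE1, ?_⟩
  have e1 : q ^ (2 * p) = q ^ p * q ^ p := by rw [← pow_add]; ring_nf
  have e2 : q ^ (2 * p - 2) = q ^ p * q ^ (p - 2) := by rw [← pow_add]; congr 1; omega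
  rw [e1, e2]
  linear_combination (-q ^ p) * hE1
end
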